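/- arXiv:2301.09405 — 7 statements merged into one kernel-verified Lean document; each statement's English description precedes it below -/
import Mathlib

section
/- Let x : [0,1] → ℝ^d be a path that is d-times continuously differentiable on (0,1) and continuous on [0,1], and suppose x has totally positive torsion, i.e., for every t ∈ (0,1) all leading principal minors of the d×d matrix whose columns are x'(t), x''(t), …, x^(d)(t) are strictly positive. Then x satisfies the strictly positive determinant condition: det(x'(t_1), …, x'(t_d)) > 0 for all 0 < t_1 < … < t_d < 1. -/
open MeasureTheory Set Filter

noncomputable section

/-- The ordered `k`-simplex `{0 ≤ t 0 < t 1 < ⋯ < t (k-1) ≤ 1}`. -/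
def orderedSimplex (k : ℕ) : Set (Fin k → ℝ) :=
  {t | StrictMono t ∧ ∀ i, t i ∈ Icc (0 : ℝ) 1}

/-- The level-`d` alternating signature
`α^(d)(x) = (1/d!) ∫_{Δ^d} det(x'(t₁), …, x'(t_d)) dt`. -/
def altSig (d : ℕ) (x : ℝ → Fin d → ℝ) : ℝ :=
  (1 / (Nat.factorial d : ℝ)) *
    ∫ t in orderedSimplex d, Matrix.det (Matrix.of fun i j => deriv x (t j) i)

/-- A `d`-order path: the determinant of the `(d+1) × (d+1)` matrix whose columns are
`(1, x(t_j))` is positive for all increasing `0 ≤ t₀ < ⋯ < t_d ≤ 1`. -/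
def IsDOrderPath (d : ℕ) (x : ℝ → Fin d → ℝ) : Prop :=
  ∀ t : Fin (d + 1) → ℝ, StrictMono t → (∀ i, t i ∈ Icc (0 : ℝ) 1) →
    0 < Matrix.det (Matrix.of fun i j => Fin.cons (1 : ℝ) (x (t j)) i)

/-- A cyclic path: a uniform limit on `[0,1]` of Lipschitz `d`-order paths with
uniformly bounded Lipschitz constants. -/
def IsCyclicPath (d : ℕ) (x : ℝ → Fin d → ℝ) : Prop :=
  ∃ (y : ℕ → ℝ → Fin d → ℝ) (K : NNReal),
    (∀ n, LipschitzOnWith K (y n) (Icc 0 1)) ∧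
    (∀ n, IsDOrderPath d (y n)) ∧
    TendstoUniformlyOn y x atTop (Icc 0 1)

lemma iteratedDeriv_const' (k : ℕ) (c : ℝ) (t : ℝ) :
    iteratedDeriv k (fun _ : ℝ => c) t = if k = 0 then c else 0 := by
  induction k generalizing c t with
  | zero => simp
  | succ k ih =>
    rw [iteratedDeriv_succ']
    simp only [deriv_const']
    simpa using ih 0 t

lemma contDiffOn_iteratedDeriv {n k : ℕ} {F : Type*} [NormedAddCommGroup F] [NormedSpace ℝ F]
    {f : ℝ → F} {s : Set ℝ} (hf : ContDiffOn ℝ n f s) (hs : IsOpen s) (hk : k ≤ n) :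
    ContDiffOn ℝ ((n - k : ℕ) : ℕ∞) (iteratedDeriv k f) s := by
  induction k with
  | zero => simpa using hf
  | succ k ih =>
    rw [iteratedDeriv_succ]
    refine ContDiffOn.deriv_of_isOpen (ih (le_of_lt hk)) hs ?_
    have : (n - (k+1) : ℕ) + 1 = n - k := by omega
    exact_mod_cast le_of_eq (by exact_mod_cast congrArg (Nat.cast : ℕ → ℕ∞) this)

lemma differentiableAt_iteratedDeriv {n k : ℕ} {F : Type*} [NormedAddCommGroup F]
    [NormedSpace ℝ F] {f : ℝ → F} {s : Set ℝ} (hf : ContDiffOn ℝ n f s) (hs : IsOpen s)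
    (hk : k < n) {t : ℝ} (ht : t ∈ s) : DifferentiableAt ℝ (iteratedDeriv k f) t := by
  have h1 : ContDiffOn ℝ ((n - k : ℕ) : ℕ∞) (iteratedDeriv k f) s :=
    contDiffOn_iteratedDeriv hf hs hk.le
  have h2 : (1 : ℕ∞) ≤ ((n - k : ℕ) : ℕ∞) := by
    have : (1 : ℕ) ≤ n - k := by omega
    exact_mod_cast this
  exact ((h1.differentiableOn (by exact_mod_cast (show n - k ≠ 0 by omega))).differentiableAt (hs.mem_nhds ht))

lemma continuousOn_iteratedDeriv {n k : ℕ} {F : Type*} [NormedAddCommGroup F]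
    [NormedSpace ℝ F] {f : ℝ → F} {s : Set ℝ} (hf : ContDiffOn ℝ n f s) (hs : IsOpen s)
    (hk : k ≤ n) : ContinuousOn (iteratedDeriv k f) s :=
  (contDiffOn_iteratedDeriv hf hs hk).continuousOn

/-- Leibniz formula for iterated derivatives, on an open set. -/
lemma iteratedDeriv_mul_eqOn {n : ℕ} {s : Set ℝ} (hs : IsOpen s) {c u : ℝ → ℝ}
    (hc : ContDiffOn ℝ n c s) (hu : ContDiffOn ℝ n u s) :
    ∀ k, k ≤ n → ∀ t ∈ s, iteratedDeriv k (fun y => c y * u y) t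
      = ∑ m ∈ Finset.range (k+1),
          (k.choose m : ℝ) * iteratedDeriv m c t * iteratedDeriv (k-m) u t := by
  intro k
  induction k with
  | zero => intro _ t ht; simp
  | succ k IH =>
    intro hk t ht
    have hEq : Set.EqOn (iteratedDeriv k fun y => c y * u y)
        (fun y => ∑ m ∈ Finset.range (k+1),
          (k.choose m : ℝ) * iteratedDeriv m c y * iteratedDeriv (k-m) u y) s :=
      fun y hy => IH (by omega) y hy
    have hne : iteratedDeriv k (fun y => c y * u y) =ᶠ[nhds t]
        (fun y => ∑ m ∈ Finset.range (k+1),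
          (k.choose m : ℝ) * iteratedDeriv m c y * iteratedDeriv (k-m) u y) := by
      filter_upwards [hs.mem_nhds ht] with y hy using hEq hy
    have hdc : ∀ m, m ≤ k → DifferentiableAt ℝ (iteratedDeriv m c) t :=
      fun m hm => differentiableAt_iteratedDeriv hc hs (by omega) ht
    have hdu : ∀ m, m ≤ k → DifferentiableAt ℝ (iteratedDeriv (k-m) u) t :=
      fun m hm => differentiableAt_iteratedDeriv hu hs (by omega) ht
    rw [iteratedDeriv_succ, hne.deriv_eq, deriv_fun_sum (fun m hm => by
      have hm' : m ≤ k := by simpa using Finset.mem_range_succ_iff.mp hm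
      exact (((hdc m hm').const_mul _).mul (hdu m hm')))]
    have hterm : ∀ m ∈ Finset.range (k+1),
        deriv (fun y => (k.choose m : ℝ) * iteratedDeriv m c y * iteratedDeriv (k-m) u y) t
        = (k.choose m : ℝ) * (iteratedDeriv (m+1) c t * iteratedDeriv (k-m) u t
            + iteratedDeriv m c t * iteratedDeriv (k-m+1) u t) := by
      intro m hm
      have hm' : m ≤ k := Finset.mem_range_succ_iff.mp hm
      have h1 : DifferentiableAt ℝ (fun y => (k.choose m : ℝ) * iteratedDeriv m c y) t :=
        (hdc m hm').const_mul _
      rw [deriv_fun_mul h1 (hdu m hm'), deriv_const_mul _ (hdc m hm')]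
      rw [← iteratedDeriv_succ, ← iteratedDeriv_succ]
      ring
    rw [Finset.sum_congr rfl hterm]
    -- Pascal shuffle
    have key : ∀ (a b : ℕ → ℝ),
        ∑ m ∈ Finset.range (k+1), (k.choose m : ℝ) * (a (m+1) * b (k-m) + a m * b (k-m+1))
        = ∑ m ∈ Finset.range (k+2), ((k+1).choose m : ℝ) * a m * b (k+1-m) := by
      intro a b
      have reindex : ∑ m ∈ Finset.range (k+2), ((k+1).choose m : ℝ) * a m * b (k+1-m)
          = ∑ m ∈ Finset.range (k+1), ((k+1).choose (m+1) : ℝ) * a (m+1) * b (k-m)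
            + a 0 * b (k+1) := by
        rw [Finset.sum_range_succ' (fun m => ((k+1).choose m : ℝ) * a m * b (k+1-m)) (k+1)]
        simp only [Nat.choose_zero_right, Nat.cast_one, one_mul, Nat.sub_zero]
        congr 1
        refine Finset.sum_congr rfl fun m hm => ?_
        have : k + 1 - (m + 1) = k - m := by omega
        rw [this]
      rw [reindex]
      have split : ∀ m, ((k+1).choose (m+1) : ℝ) = (k.choose m : ℝ) + (k.choose (m+1) : ℝ) := by
        intro m; rw [Nat.choose_succ_succ]; push_cast; ring
      simp only [split, add_mul, Finset.sum_add_distrib]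
      have shift : ∑ m ∈ Finset.range (k+1), (k.choose (m+1) : ℝ) * a (m+1) * b (k-m)
            + a 0 * b (k+1)
          = ∑ m ∈ Finset.range (k+1), (k.choose m : ℝ) * a m * b (k+1-m) := by
        have h2 : ∑ m ∈ Finset.range (k+2), (k.choose m : ℝ) * a m * b (k+1-m)
            = ∑ m ∈ Finset.range (k+1), (k.choose (m+1) : ℝ) * a (m+1) * b (k-m)
              + a 0 * b (k+1) := by
          rw [Finset.sum_range_succ' (fun m => (k.choose m : ℝ) * a m * b (k+1-m)) (k+1)]
          simp only [Nat.choose_zero_right, Nat.cast_one, one_mul, Nat.sub_zero]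
          congr 1
          refine Finset.sum_congr rfl fun m hm => ?_
          have : k + 1 - (m + 1) = k - m := by omega
          rw [this]
        rw [← h2, Finset.sum_range_succ]
        simp [Nat.choose_succ_self]
      rw [add_assoc, shift, ← Finset.sum_add_distrib]
      refine Finset.sum_congr rfl fun m hm => ?_
      have hm' : m ≤ k := Finset.mem_range_succ_iff.mp hm
      have : k + 1 - m = k - m + 1 := by omega
      rw [this]; ring
    have := key (fun m => iteratedDeriv m c t) (fun m => iteratedDeriv m u t)
    simp only [mul_add] at this ⊢
    convert this using 2

/-- Wronskian scaling: multiplying all functions by a common factor `c` multiplies the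
Wronskian determinant by `c ^ size`. -/
lemma det_iteratedDeriv_mul {m : ℕ} {s : Set ℝ} (hs : IsOpen s) {c : ℝ → ℝ}
    {u : Fin (m+1) → ℝ → ℝ} (hc : ContDiffOn ℝ m c s) (hu : ∀ j, ContDiffOn ℝ m (u j) s)
    {t : ℝ} (ht : t ∈ s) :
    Matrix.det (Matrix.of fun i j : Fin (m+1) => iteratedDeriv i (fun y => c y * u j y) t)
      = c t ^ (m+1) *
        Matrix.det (Matrix.of fun i j : Fin (m+1) => iteratedDeriv i (u j) t) := by
  set L : Matrix (Fin (m+1)) (Fin (m+1)) ℝ := Matrix.of fun i q =>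
    if (q : ℕ) ≤ (i : ℕ) then
      ((i : ℕ).choose q : ℝ) * iteratedDeriv ((i : ℕ) - q) c t else 0 with hL
  have hfact : (Matrix.of fun i j : Fin (m+1) => iteratedDeriv i (fun y => c y * u j y) t)
      = L * (Matrix.of fun i j : Fin (m+1) => iteratedDeriv i (u j) t) := by
    ext i j
    rw [Matrix.mul_apply]
    have hle : (i : ℕ) ≤ m := by omega
    rw [Matrix.of_apply, iteratedDeriv_mul_eqOn hs hc (hu j) i hle t ht]
    have e1 : ∑ q ∈ Finset.range ((i:ℕ)+1),
          ((i:ℕ).choose q : ℝ) * iteratedDeriv q c t * iteratedDeriv ((i:ℕ)-q) (u j) t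
        = ∑ q ∈ Finset.range ((i:ℕ)+1),
          ((i:ℕ).choose q : ℝ) * iteratedDeriv ((i:ℕ)-q) c t * iteratedDeriv q (u j) t := by
      rw [← Finset.sum_range_reflect]
      refine Finset.sum_congr rfl fun q hq => ?_
      have hq' : q ≤ (i:ℕ) := Finset.mem_range_succ_iff.mp hq
      have h1 : (i:ℕ) + 1 - 1 - q = (i:ℕ) - q := by omega
      have h2 : (i:ℕ) - ((i:ℕ) - q) = q := by omega
      rw [h1, Nat.choose_symm hq', h2]
    have e2 : ∑ q ∈ Finset.range ((i:ℕ)+1),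
          ((i:ℕ).choose q : ℝ) * iteratedDeriv ((i:ℕ)-q) c t * iteratedDeriv q (u j) t
        = ∑ q ∈ Finset.range ((i:ℕ)+1),
          (if q ≤ (i:ℕ) then ((i:ℕ).choose q : ℝ) * iteratedDeriv ((i:ℕ)-q) c t else 0)
            * iteratedDeriv q (u j) t := by
      refine Finset.sum_congr rfl fun q hq => ?_
      rw [if_pos (Finset.mem_range_succ_iff.mp hq), mul_assoc]
    have e3 : ∑ q ∈ Finset.range ((i:ℕ)+1),
          (if q ≤ (i:ℕ) then ((i:ℕ).choose q : ℝ) * iteratedDeriv ((i:ℕ)-q) c t else 0)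
            * iteratedDeriv q (u j) t
        = ∑ q ∈ Finset.range (m+1),
          (if q ≤ (i:ℕ) then ((i:ℕ).choose q : ℝ) * iteratedDeriv ((i:ℕ)-q) c t else 0)
            * iteratedDeriv q (u j) t := by
      refine Finset.sum_subset (Finset.range_subset_range.mpr (by omega)) fun q _ hq => ?_
      rw [if_neg (fun h => hq (Finset.mem_range_succ_iff.mpr h)), zero_mul]
    have e4 : ∑ q ∈ Finset.range (m+1),
          (if q ≤ (i:ℕ) then ((i:ℕ).choose q : ℝ) * iteratedDeriv ((i:ℕ)-q) c t else 0)
            * iteratedDeriv q (u j) t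
        = ∑ q : Fin (m+1), L i q
            * (Matrix.of fun i j : Fin (m+1) => iteratedDeriv i (u j) t) q j := by
      rw [← Fin.sum_univ_eq_sum_range (fun q =>
        (if q ≤ (i:ℕ) then ((i:ℕ).choose q : ℝ) * iteratedDeriv ((i:ℕ)-q) c t else 0)
          * iteratedDeriv q (u j) t) (m+1)]
      rfl
    rw [e1, e2, e3, e4]
  have hLdet : L.det = c t ^ (m+1) := by
    have htri : L.BlockTriangular OrderDual.toDual := by
      intro i q h
      have hlt : (i : ℕ) < (q : ℕ) := h
      simp only [hL, Matrix.of_apply, if_neg (by omega : ¬ (q:ℕ) ≤ (i:ℕ))]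
    rw [Matrix.det_of_lowerTriangular L htri]
    have hdiag : ∀ i : Fin (m+1), L i i = c t := by
      intro i
      simp [hL, Nat.choose_self]
    rw [Finset.prod_congr rfl fun i _ => hdiag i]
    simp
  rw [hfact, Matrix.det_mul, hLdet]

/-- If the determinant of columns `g · (u j)` is positive for all choices of sample points
`u j ∈ Ioo (a j) (b j)`, then the determinant of the column-wise integrals is positive. -/
lemma det_intervalIntegral_pos {N : ℕ} {s : Set ℝ} (g : Fin N → ℝ → ℝ)
    (hg : ∀ i, ContinuousOn (g i) s) (a b : Fin N → ℝ)
    (hab : ∀ j, a j < b j) (hIcc : ∀ j, Icc (a j) (b j) ⊆ s)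
    (hpos : ∀ u : Fin N → ℝ, (∀ j, u j ∈ Ioo (a j) (b j)) →
      0 < Matrix.det (Matrix.of fun i j => g i (u j))) :
    0 < Matrix.det (Matrix.of fun i j => ∫ y in (a j)..(b j), g i y) := by
  have key : ∀ m, m ≤ N → ∀ u : Fin N → ℝ, (∀ j : Fin N, m ≤ (j : ℕ) → u j ∈ Ioo (a j) (b j)) →
      0 < Matrix.det (Matrix.of fun i j : Fin N =>
        if (j : ℕ) < m then ∫ y in (a j)..(b j), g i y else g i (u j)) := by
    intro m
    induction m with
    | zero =>
      intro _ u hu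
      have he : (Matrix.of fun i j : Fin N =>
          if (j : ℕ) < 0 then ∫ y in (a j)..(b j), g i y else g i (u j))
          = Matrix.of fun i j => g i (u j) := by
        ext i j; simp
      rw [he]
      exact hpos u fun j => hu j (Nat.zero_le _)
    | succ m IH =>
      intro hm u hu
      have hmN : m < N := by omega
      set jm : Fin N := ⟨m, hmN⟩ with hjm
      set B : Matrix (Fin N) (Fin N) ℝ := Matrix.of fun i j : Fin N =>
        if (j : ℕ) < m then ∫ y in (a j)..(b j), g i y else g i (u j) with hB
      set A : (Fin N → ℝ) → Matrix (Fin N) (Fin N) ℝ := fun w =>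
        B.updateCol jm w with hA
      have hAeval : ∀ y : ℝ, y ∈ Ioo (a jm) (b jm) → 0 < (A (fun i => g i y)).det := by
        intro y hy
        have he : A (fun i => g i y) = Matrix.of fun i j : Fin N =>
            if (j : ℕ) < m then ∫ y' in (a j)..(b j), g i y'
            else g i (Function.update u jm y j) := by
          ext i j
          by_cases hj : j = jm
          · subst hj
            simp [hA, hB, Matrix.updateCol_apply, Function.update_self, hjm]
          · have hj' : ¬ ((j : ℕ) = m) := fun h => hj (Fin.ext h)
            simp [hA, hB, Matrix.updateCol_apply, hj, Function.update_of_ne hj]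
        rw [he]
        refine IH (by omega) _ fun (j : Fin N) hj => ?_
        by_cases hjq : j = jm
        · subst hjq; simpa [Function.update_self] using hy
        · rw [Function.update_of_ne hjq]
          have hj' : (j : ℕ) ≠ m := fun h => hjq (Fin.ext h)
          exact hu j (by omega)
      -- the determinant is linear in column jm
      set F : (Fin N → ℝ) →ₗ[ℝ] ℝ :=
        { toFun := fun w => (A w).det
          map_add' := fun w v => Matrix.det_updateCol_add B jm w v
          map_smul' := fun r w => Matrix.det_updateCol_smul B jm r w } with hF
      set L : (Fin N → ℝ) →L[ℝ] ℝ := LinearMap.toContinuousLinearMap F with hLc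
      have hIccs : Icc (a jm) (b jm) ⊆ s := hIcc jm
      have huIcc : uIcc (a jm) (b jm) = Icc (a jm) (b jm) := uIcc_of_le (hab jm).le
      have hvcont : ContinuousOn (fun y => (fun i => g i y : Fin N → ℝ))
          (Icc (a jm) (b jm)) := by
        apply continuousOn_pi.mpr
        intro i
        exact (hg i).mono hIccs
      have hvint : IntervalIntegrable (fun y => (fun i => g i y : Fin N → ℝ))
          MeasureTheory.volume (a jm) (b jm) := by
        apply ContinuousOn.intervalIntegrable
        rwa [huIcc]
      -- the target matrix equals A applied to the vector of integrals
      have htarget : (Matrix.of fun i j : Fin N =>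
          if (j : ℕ) < m + 1 then ∫ y in (a j)..(b j), g i y else g i (u j))
          = A (fun i => ∫ y in (a jm)..(b jm), g i y) := by
        ext i j
        by_cases hj : j = jm
        · subst hj
          simp [hA, hB, Matrix.updateCol_apply, hjm]
        · have hj' : (j : ℕ) ≠ m := fun h => hj (Fin.ext h)
          by_cases hlt : (j : ℕ) < m
          · simp [hA, hB, Matrix.updateCol_apply, hj, if_pos hlt, if_pos (by omega : (j:ℕ) < m + 1)]; intro h; omega
          · simp [hA, hB, Matrix.updateCol_apply, hj, if_neg hlt,
              if_neg (by omega : ¬ (j:ℕ) < m + 1)]; intro h; omega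
      rw [htarget]
      -- commute the integral with the linear functional
      have hvec : (fun i => ∫ y in (a jm)..(b jm), g i y)
          = ∫ y in (a jm)..(b jm), (fun i => g i y : Fin N → ℝ) := by
        funext i
        have h := (ContinuousLinearMap.proj (R := ℝ) (φ := fun _ : Fin N => ℝ)
          i).intervalIntegral_comp_comm hvint
        simpa [ContinuousLinearMap.proj_apply] using h
      have hLdet : ∀ w, L w = (A w).det := fun w => rfl
      rw [← hLdet, hvec, ← L.intervalIntegral_comp_comm hvint]
      have hintcont : ContinuousOn (fun y => L (fun i => g i y)) (Icc (a jm) (b jm)) :=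
        L.continuous.comp_continuousOn hvcont
      have hint2 : IntervalIntegrable (fun y => L (fun i => g i y))
          MeasureTheory.volume (a jm) (b jm) := by
        apply ContinuousOn.intervalIntegrable
        rwa [huIcc]
      exact intervalIntegral.intervalIntegral_pos_of_pos_on hint2 hAeval (hab jm)
  have h := key N le_rfl (fun j => (a j + b j) / 2) (fun j hj => absurd hj (by omega))
  have he : (Matrix.of fun i j : Fin N =>
      if (j : ℕ) < N then ∫ y in (a j)..(b j), g i y
      else g i ((a j + b j) / 2))
      = Matrix.of fun i j : Fin N => ∫ y in (a j)..(b j), g i y := by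
    ext i j; simp [j.isLt]
  rwa [he] at h

/-- On an open set, iterated derivatives of a pi-valued function can be computed
coordinate-wise. -/
lemma iteratedDeriv_pi_apply {d n : ℕ} {s : Set ℝ} (hs : IsOpen s) {x : ℝ → Fin d → ℝ}
    (hx : ContDiffOn ℝ n x s) (i : Fin d) :
    ∀ k, k ≤ n → ∀ t ∈ s, iteratedDeriv k x t i = iteratedDeriv k (fun y => x y i) t := by
  intro k
  induction k with
  | zero => intro _ t _; rfl
  | succ k IH =>
    intro hk t ht
    have hd : DifferentiableAt ℝ (iteratedDeriv k x) t :=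
      differentiableAt_iteratedDeriv hx hs (by omega) ht
    have h1 : deriv (iteratedDeriv k x) t i = deriv (fun y => iteratedDeriv k x y i) t :=
      ((hasDerivAt_pi.mp hd.hasDerivAt) i).deriv.symm
    have h2 : (fun y => iteratedDeriv k x y i) =ᶠ[nhds t]
        (fun y => iteratedDeriv k (fun z => x z i) y) := by
      filter_upwards [hs.mem_nhds ht] with y hy using IH (by omega) y hy
    rw [iteratedDeriv_succ, h1, h2.deriv_eq, ← iteratedDeriv_succ]

/-- Functions with positive leading Wronskians on an open interval form an extended
Chebyshev system: the determinant of values at increasing points is positive. -/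
lemma ect_main : ∀ (n : ℕ) (s : Set ℝ), IsOpen s → s.OrdConnected →
    ∀ f : Fin n → ℝ → ℝ, (∀ i, ContDiffOn ℝ ((n-1 : ℕ) : ℕ∞) (f i) s) →
    (∀ y ∈ s, ∀ (m : ℕ) (hm : m + 1 ≤ n),
      0 < Matrix.det (Matrix.of fun i j : Fin (m+1) =>
        iteratedDeriv i (f (Fin.castLE hm j)) y)) →
    ∀ t : Fin n → ℝ, StrictMono t → (∀ j, t j ∈ s) →
    0 < Matrix.det (Matrix.of fun i j => f i (t j)) := by
  intro n
  induction n with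
  | zero =>
    intro s _ _ f _ _ t _ _
    simp [Matrix.det_fin_zero]
  | succ n IH =>
    intro s hs hconv f hf hW t ht hts
    have hf' : ∀ i, ContDiffOn ℝ (n : ℕ∞) (f i) s := by
      intro i; simpa using hf i
    -- the first function is positive on s
    have hc : ∀ y ∈ s, 0 < f 0 y := by
      intro y hy
      have h := hW y hy 0 (by omega)
      rw [Matrix.det_fin_one] at h
      simpa using h
    set h : Fin (n+1) → ℝ → ℝ := fun j y => f j y / f 0 y with hh_def
    have hh : ∀ j, ContDiffOn ℝ (n : ℕ∞) (h j) s :=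
      fun j => (hf' j).div (hf' 0) (fun y hy => (hc y hy).ne')
    set g : Fin n → ℝ → ℝ := fun i y => deriv (h i.succ) y with hg_def
    have hg : ∀ i : Fin n, ContDiffOn ℝ ((n-1 : ℕ) : ℕ∞) (g i) s := by
      intro i
      refine (hh i.succ).deriv_of_isOpen hs ?_
      have h1 : (n - 1) + 1 = n := by have := i.pos; omega
      exact_mod_cast le_of_eq (congrArg (Nat.cast : ℕ → ℕ∞) h1)
    have hfactor : ∀ (j : Fin (n+1)) (y : ℝ), y ∈ s → f j y = f 0 y * h j y := by
      intro j y hy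
      rw [hh_def, eq_comm, mul_comm]
      exact div_mul_cancel₀ _ (hc y hy).ne'
    have hone : ∀ y ∈ s, h 0 y = 1 := fun y hy => div_self (hc y hy).ne'
    -- positive Wronskians for the reduced system g
    have hWg : ∀ y ∈ s, ∀ (m : ℕ) (hm : m + 1 ≤ n),
        0 < Matrix.det (Matrix.of fun i j : Fin (m+1) =>
          iteratedDeriv i (g (Fin.castLE hm j)) y) := by
      intro y hy m hm
      have hm2 : (m + 1) + 1 ≤ n + 1 := by omega
      have hWf := hW y hy (m+1) hm2
      have e1 : (Matrix.of fun i j : Fin (m+2) =>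
            iteratedDeriv i (f (Fin.castLE hm2 j)) y)
          = Matrix.of fun i j : Fin (m+2) =>
            iteratedDeriv i (fun z => f 0 z * h (Fin.castLE hm2 j) z) y := by
        ext i j
        exact Set.EqOn.iteratedDeriv_of_isOpen
          (fun z hz => hfactor (Fin.castLE hm2 j) z hz) hs i hy
      rw [e1] at hWf
      have hcm : ContDiffOn ℝ ((m+1 : ℕ) : ℕ∞) (f 0) s :=
        (hf' 0).of_le (by exact_mod_cast hm)
      have hum : ∀ j : Fin (m+2), ContDiffOn ℝ ((m+1 : ℕ) : ℕ∞)
          (h (Fin.castLE hm2 j)) s :=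
        fun j => (hh _).of_le (by exact_mod_cast hm)
      rw [det_iteratedDeriv_mul hs hcm hum hy] at hWf
      have hpow : 0 < f 0 y ^ (m+1+1) := pow_pos (hc y hy) _
      have hWh : 0 < Matrix.det (Matrix.of fun i j : Fin (m+1+1) =>
          iteratedDeriv i (h (Fin.castLE hm2 j)) y) := by
        rcases mul_pos_iff.mp hWf with ⟨_, hq⟩ | ⟨h1, _⟩
        · exact hq
        · linarith
      -- reduce the first column
      set M : Matrix (Fin (m+2)) (Fin (m+2)) ℝ :=
        Matrix.of fun i j : Fin (m+2) => iteratedDeriv i (h (Fin.castLE hm2 j)) y with hM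
      have hMcol0 : ∀ i : Fin (m+2), M i 0 = if (i : ℕ) = 0 then 1 else 0 := by
        intro i
        have hcast0 : Fin.castLE hm2 (0 : Fin (m+2)) = (0 : Fin (n+1)) := rfl
        have heq : Set.EqOn (h (Fin.castLE hm2 (0 : Fin (m+2)))) (fun _ => (1:ℝ)) s := by
          intro z hz
          rw [hcast0]
          exact hone z hz
        calc M i 0 = iteratedDeriv i (fun _ => (1:ℝ)) y :=
              heq.iteratedDeriv_of_isOpen hs i hy
          _ = if (i : ℕ) = 0 then 1 else 0 := iteratedDeriv_const' i 1 y
      have hdet : M.det = Matrix.det (M.submatrix Fin.succ Fin.succ) := by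
        rw [Matrix.det_succ_column_zero]
        rw [Finset.sum_eq_single 0]
        · simp [hMcol0]
        · intro i _ hi
          have hne : ¬ ((i : ℕ) = (0 : ℕ)) := fun hc0 => hi (Fin.ext hc0)
          rw [hMcol0 i, if_neg hne]
          ring
        · intro habs
          exact absurd (Finset.mem_univ _) habs
      have hsub : M.submatrix Fin.succ Fin.succ
          = Matrix.of fun i j : Fin (m+1) => iteratedDeriv i (g (Fin.castLE hm j)) y := by
        ext i j
        have hcast : Fin.castLE hm2 (Fin.succ j) = Fin.succ (Fin.castLE hm j) :=
          Fin.ext (by simp)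
        show iteratedDeriv (i.succ : ℕ) (h (Fin.castLE hm2 j.succ)) y = _
        rw [hcast]
        show iteratedDeriv ((i : ℕ)+1) (h (Fin.castLE hm j).succ) y = _
        rw [iteratedDeriv_succ']
        rfl
      rw [hdet, hsub] at hWh
      exact hWh
    have hgmain := IH s hs hconv g hg hWg
    -- now the determinant chain
    have e1 : (Matrix.of fun i j : Fin (n+1) => f i (t j))
        = Matrix.of fun i j : Fin (n+1) => f 0 (t j) * h i (t j) := by
      ext i j; exact hfactor i (t j) (hts j)
    have e2 : Matrix.det (Matrix.of fun i j : Fin (n+1) => f 0 (t j) * h i (t j))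
        = (∏ j : Fin (n+1), f 0 (t j)) *
          Matrix.det (Matrix.of fun i j : Fin (n+1) => h i (t j)) :=
      Matrix.det_mul_row (fun j => f 0 (t j)) (Matrix.of fun i j => h i (t j))
    set A : Matrix (Fin (n+1)) (Fin (n+1)) ℝ := Matrix.of fun i j => h i (t j) with hA
    set U : Matrix (Fin (n+1)) (Fin (n+1)) ℝ := Matrix.of fun q j =>
      if q = j then 1 else if (q:ℕ)+1 = (j:ℕ) then -1 else 0 with hU
    have hUdet : U.det = 1 := by
      have htri : U.BlockTriangular id := by
        intro q j hqj
        have hlt : (j:ℕ) < (q:ℕ) := hqj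
        have h1 : ¬ (q = j) := fun he => by simp [he] at hlt
        have h2 : ¬ ((q:ℕ)+1 = (j:ℕ)) := by omega
        simp [hU, h1, h2]
      rw [Matrix.det_of_upperTriangular htri]
      simp [hU]
    set B : Matrix (Fin (n+1)) (Fin (n+1)) ℝ := A * U with hB
    have hBval : ∀ (i : Fin (n+1)) (j' : Fin n),
        B i j'.succ = h i (t j'.succ) - h i (t j'.castSucc) := by
      intro i j'
      rw [hB, Matrix.mul_apply]
      have hpt : ∀ q : Fin (n+1), A i q * U q j'.succ
          = (if q = j'.succ then h i (t j'.succ) else 0)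
            + (if q = j'.castSucc then -(h i (t j'.castSucc)) else 0) := by
        intro q
        by_cases h1 : q = j'.succ
        · subst h1
          have h2 : (j'.succ : Fin (n+1)) ≠ j'.castSucc := (Fin.castSucc_lt_succ (i := j')).ne'
          simp [hU, hA, h2]
        · by_cases h3 : q = j'.castSucc
          · subst h3
            have h4 : ((j'.castSucc : Fin (n+1)):ℕ) + 1 = ((j'.succ : Fin (n+1)):ℕ) := by
              simp
            simp [hU, hA, h1, h4]
          · have h4 : ¬ ((q:ℕ)+1 = ((j'.succ : Fin (n+1)) : ℕ)) := by
              rw [Fin.val_succ]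
              intro he
              exact h3 (Fin.ext (by
                have := Nat.succ_injective he
                simpa using this))
            have h3' : ¬ ((q:ℕ) = ((j'.castSucc : Fin (n+1)):ℕ)) :=
              fun he => h3 (Fin.ext he)
            have h3'' : ¬ ((q:ℕ) = (j':ℕ)) := fun he => h3 (Fin.ext (by simpa using he))
            simp [hU, hA, h1, h3, h3', h3'', h4]
      rw [Finset.sum_congr rfl fun q _ => hpt q, Finset.sum_add_distrib,
        Finset.sum_ite_eq' Finset.univ, Finset.sum_ite_eq' Finset.univ]
      simp only [Finset.mem_univ, if_true]
      ring
    have hBval0 : ∀ i : Fin (n+1), B i 0 = h i (t 0) := by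
      intro i
      rw [hB, Matrix.mul_apply, Finset.sum_eq_single 0]
      · simp [hU, hA]
      · intro q _ hq
        have h2 : ¬((q:ℕ) + 1 = ((0 : Fin (n+1)) : ℕ)) := by simp
        simp [hU, hA, hq, h2]
      · intro habs; exact absurd (Finset.mem_univ _) habs
    have hBrow0 : ∀ j : Fin (n+1), B 0 j = if (j:ℕ) = 0 then 1 else 0 := by
      intro j
      refine Fin.cases ?_ ?_ j
      · rw [hBval0]
        simp [hone (t 0) (hts 0)]
      · intro j'
        rw [hBval 0 j']
        rw [hone (t j'.succ) (hts _), hone (t j'.castSucc) (hts _)]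
        simp
    have hdetB : B.det = Matrix.det (B.submatrix Fin.succ Fin.succ) := by
      rw [Matrix.det_succ_row_zero, Finset.sum_eq_single 0]
      · simp [hBrow0]
      · intro j _ hj
        have hne : ¬ ((j : ℕ) = (0:ℕ)) := fun hc0 => hj (Fin.ext hc0)
        rw [hBrow0 j, if_neg hne]
        ring
      · intro habs; exact absurd (Finset.mem_univ _) habs
    have hCint : ∀ (i : Fin n) (j : Fin n),
        B i.succ j.succ = ∫ y in (t j.castSucc)..(t j.succ), g i y := by
      intro i j
      rw [hBval i.succ j]
      have hle : t j.castSucc ≤ t j.succ := (ht (Fin.castSucc_lt_succ (i := j))).le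
      have hIccs : Icc (t j.castSucc) (t j.succ) ⊆ s := hconv.out (hts _) (hts _)
      have huIcc : uIcc (t j.castSucc) (t j.succ) = Icc (t j.castSucc) (t j.succ) :=
        uIcc_of_le hle
      have hderiv : ∀ y ∈ uIcc (t j.castSucc) (t j.succ),
          HasDerivAt (h i.succ) (g i y) y := by
        intro y hy
        rw [huIcc] at hy
        have hys : y ∈ s := hIccs hy
        have h1n : (1:ℕ) ≤ n := i.pos
        have hd : DifferentiableAt ℝ (h i.succ) y :=
          ((hh i.succ).differentiableOn (by exact_mod_cast (show n ≠ 0 by omega))).differentiableAt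
            (hs.mem_nhds hys)
        exact hd.hasDerivAt
      have hint : IntervalIntegrable (g i) MeasureTheory.volume (t j.castSucc) (t j.succ) := by
        apply ContinuousOn.intervalIntegrable
        rw [huIcc]
        exact ((hg i).continuousOn).mono hIccs
      rw [intervalIntegral.integral_eq_sub_of_hasDerivAt hderiv hint]
    have hposC : 0 < Matrix.det (B.submatrix Fin.succ Fin.succ) := by
      have heq : B.submatrix Fin.succ Fin.succ
          = Matrix.of fun i j : Fin n => ∫ y in (t j.castSucc)..(t j.succ), g i y := by
        ext i j; exact hCint i j
      rw [heq]
      refine det_intervalIntegral_pos g (fun i => (hg i).continuousOn)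
        (fun j => t j.castSucc) (fun j => t j.succ)
        (fun j => ht (Fin.castSucc_lt_succ (i := j))) (fun j => hconv.out (hts _) (hts _))
        (fun u hu => ?_)
      have hmono : StrictMono u := by
        intro j1 j2 hlt
        calc u j1 < t j1.succ := (hu j1).2
          _ ≤ t j2.castSucc := ht.monotone (by
            have hv : (j1:ℕ) < (j2:ℕ) := hlt
            rw [Fin.le_def]
            simpa using hv)
          _ < u j2 := (hu j2).1
      exact hgmain u hmono (fun j =>
        (hconv.out (hts j.castSucc) (hts j.succ)) (Ioo_subset_Icc_self (hu j)))
    have hAdet : A.det = B.det := by rw [hB, Matrix.det_mul, hUdet, mul_one]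
    have hApos : 0 < A.det := by rw [hAdet, hdetB]; exact hposC
    rw [e1, e2]
    exact mul_pos (Finset.prod_pos fun j _ => hc (t j) (hts j)) hApos

/-- A path with totally positive torsion (all leading principal minors of the
matrix of derivatives `(x'(t), …, x^(d)(t))` are positive on `(0,1)`) satisfies the strictly
positive determinant condition. -/
theorem sdet_of_totally_positive_torsion (d : ℕ) (x : ℝ → Fin d → ℝ)
    (hC : ContDiffOn ℝ d x (Ioo 0 1)) (hcont : ContinuousOn x (Icc 0 1))
    (htpt : ∀ t ∈ Ioo (0 : ℝ) 1, ∀ k : Fin d,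
      0 < Matrix.det (Matrix.of fun i j : Fin ((k : ℕ) + 1) =>
        iteratedDeriv ((j : ℕ) + 1) x t (Fin.castLE k.isLt i))) :
    ∀ t : Fin d → ℝ, StrictMono t → (∀ i, t i ∈ Ioo (0 : ℝ) 1) →
      0 < Matrix.det (Matrix.of fun i j => deriv x (t j) i) := by
  intro t ht hts
  have hs : IsOpen (Ioo (0:ℝ) 1) := isOpen_Ioo
  have hconv : (Ioo (0:ℝ) 1).OrdConnected := ordConnected_Ioo
  set f : Fin d → ℝ → ℝ := fun i => deriv (fun y => x y i) with hfdef
  have hxc : ∀ i : Fin d, ContDiffOn ℝ (d : ℕ∞) (fun y => x y i) (Ioo (0:ℝ) 1) := fun i =>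
    (ContinuousLinearMap.proj (R := ℝ) (φ := fun _ : Fin d => ℝ)
      i).contDiff.comp_contDiffOn hC
  have hfC : ∀ i : Fin d, ContDiffOn ℝ ((d-1 : ℕ) : ℕ∞) (f i) (Ioo (0:ℝ) 1) := by
    intro i
    refine (hxc i).deriv_of_isOpen hs ?_
    have h1 : (d-1) + 1 = d := by have := i.pos; omega
    exact_mod_cast le_of_eq (congrArg (Nat.cast : ℕ → ℕ∞) h1)
  have hW : ∀ y ∈ Ioo (0:ℝ) 1, ∀ (m : ℕ) (hm : m + 1 ≤ d),
      0 < Matrix.det (Matrix.of fun i j : Fin (m+1) =>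
        iteratedDeriv i (f (Fin.castLE hm j)) y) := by
    intro y hy m hm
    have hk := htpt y hy ⟨m, hm⟩
    rw [← Matrix.det_transpose] at hk
    have heq : Matrix.transpose (Matrix.of fun i j : Fin (m + 1) =>
        iteratedDeriv ((j : ℕ) + 1) x y (Fin.castLE hm i))
        = Matrix.of fun i j : Fin (m+1) => iteratedDeriv i (f (Fin.castLE hm j)) y := by
      ext i j
      show iteratedDeriv ((i:ℕ)+1) x y (Fin.castLE hm j)
        = iteratedDeriv (i:ℕ) (f (Fin.castLE hm j)) y
      rw [hfdef]
      show _ = iteratedDeriv (i:ℕ) (deriv fun y => x y (Fin.castLE hm j)) y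
      rw [← iteratedDeriv_succ']
      exact iteratedDeriv_pi_apply hs hC (Fin.castLE hm j) ((i:ℕ)+1)
        (by have := i.isLt; omega) y hy
    rw [heq] at hk
    exact hk
  have hfin : (Matrix.of fun i j : Fin d => deriv x (t j) i)
      = Matrix.of fun i j : Fin d => f i (t j) := by
    ext i j
    show deriv x (t j) i = deriv (fun y => x y i) (t j)
    have h1 : iteratedDeriv 1 x (t j) i = iteratedDeriv 1 (fun y => x y i) (t j) :=
      iteratedDeriv_pi_apply hs hC i 1 (by have := i.pos; omega) (t j) (hts j)
    simpa [iteratedDeriv_one] using h1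
  rw [hfin]
  exact ect_main d (Ioo 0 1) hs hconv f hfC hW t ht hts
end
end

section
/- Let x : [0,1] → ℝ^d be a Lipschitz path that satisfies the strictly positive determinant condition, i.e., det(x'(t_1), …, x'(t_d)) > 0 for all 0 < t_1 < … < t_d < 1 at points where x is differentiable. Then x is a d-order path; that is, det of the matrix with columns (1, x(t_0)), …, (1, x(t_d)) is strictly positive for all 0 ≤ t_0 < … < t_d ≤ 1. -/
open MeasureTheory Set Filter

noncomputable section

section AuxDOrder
open intervalIntegral Topology Equiv

lemma det_ones_row {d : ℕ} (v : Fin (d + 1) → Fin d → ℝ) :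
    Matrix.det (Matrix.of fun i j => Fin.cons (1 : ℝ) (v j) i) =
    Matrix.det (Matrix.of fun (i j : Fin d) => v j.succ i - v j.castSucc i) := by
  set M : Matrix (Fin (d + 1)) (Fin (d + 1)) ℝ :=
    Matrix.of fun (i j : Fin (d + 1)) => Fin.cons (α := fun _ => ℝ) 1 (v j) i with hM
  set B : Matrix (Fin (d + 1)) (Fin (d + 1)) ℝ :=
    Matrix.of fun i j => Fin.cases (M i 0) (fun j' => M i j'.succ - M i j'.castSucc) j with hB
  have h1 : M.det = B.det := by
    apply Matrix.det_eq_of_forall_col_eq_smul_add_pred (fun _ => (1 : ℝ))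
    · intro i; simp [hB]
    · intro i j; simp [hB]
  rw [h1, Matrix.det_succ_row_zero]
  rw [Finset.sum_eq_single 0]
  · have hB00 : B 0 0 = 1 := by simp [hB, hM]
    rw [hB00, Fin.succAbove_zero]
    simp only [Fin.val_zero, pow_zero, one_mul, mul_one]
    have hsub : B.submatrix Fin.succ Fin.succ =
        Matrix.of fun (i j : Fin d) => v j.succ i - v j.castSucc i := by
      ext i j
      simp [hB, hM, Matrix.submatrix_apply, Fin.cons_succ, Fin.cases_succ]
    rw [hsub]
  · intro j _ hj
    obtain ⟨j', rfl⟩ := Fin.eq_succ_of_ne_zero hj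
    have hz : B 0 j'.succ = 0 := by simp [hB, hM]
    rw [hz]; ring
  · intro h; exact absurd (Finset.mem_univ 0) h

lemma det_integral_columns {d : ℕ} (g : Fin d → ℝ → (Fin d → ℝ))
    (hgi : ∀ j i : Fin d, Integrable (fun u => g j u i) volume) :
    Matrix.det (Matrix.of fun i j => ∫ s, g j s i) =
    ∫ s : Fin d → ℝ, Matrix.det (Matrix.of fun i j => g j (s j) i) := by
  have h2 : ∀ σ : Perm (Fin d),
      Integrable (fun s : Fin d → ℝ => ∏ i, g i (s i) (σ i)) volume :=
    fun σ => Integrable.fin_nat_prod (fun i => hgi i (σ i))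
  rw [Matrix.det_apply']
  have key : ∀ σ : Perm (Fin d),
      ((Equiv.Perm.sign σ : ℤ) : ℝ) * ∏ i, (Matrix.of fun i j => ∫ s, g j s i) (σ i) i =
      ∫ s : Fin d → ℝ, ((Equiv.Perm.sign σ : ℤ) : ℝ) * ∏ i, g i (s i) (σ i) := by
    intro σ
    rw [MeasureTheory.integral_const_mul]
    congr 1
    calc ∏ i, (Matrix.of fun i j => ∫ s, g j s i) (σ i) i
        = ∏ i, ∫ s, g i s (σ i) := by simp only [Matrix.of_apply]
      _ = ∫ s : Fin d → ℝ, ∏ i, g i (s i) (σ i) :=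
          (MeasureTheory.integral_fin_nat_prod_eq_prod (fun i u => g i u (σ i))).symm
  rw [Finset.sum_congr rfl (fun σ _ => key σ)]
  rw [← integral_finset_sum _ (fun σ _ => (h2 σ).const_mul _)]
  congr 1
  funext s
  rw [Matrix.det_apply']
  simp only [Matrix.of_apply]

lemma tendsto_seq_nhdsNE (s : ℝ) :
    Tendsto (fun n : ℕ => s + ((n : ℝ) + 1)⁻¹) atTop (𝓝[≠] s) := by
  apply tendsto_nhdsWithin_of_tendsto_nhds_of_eventually_within
  · have h0 : Tendsto (fun n : ℕ => ((n : ℝ) + 1)⁻¹) atTop (𝓝 0) := by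
      simpa using tendsto_one_div_add_atTop_nhds_zero_nat (𝕜 := ℝ)
    simpa using tendsto_const_nhds.add h0
  · filter_upwards with n
    have : (0 : ℝ) < ((n : ℝ) + 1)⁻¹ := by positivity
    simp only [mem_compl_iff, mem_singleton_iff]
    intro h
    nlinarith [this, h]

lemma lip_norm_deriv_le {d : ℕ} {K : NNReal} {y : ℝ → Fin d → ℝ}
    (hy : LipschitzWith K y) (s : ℝ) : ‖deriv y s‖ ≤ K := by
  by_cases h : DifferentiableAt ℝ y s
  · have h' := h.hasDerivAt
    rw [hasDerivAt_iff_tendsto_slope] at h'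
    refine le_of_tendsto h'.norm ?_
    filter_upwards [self_mem_nhdsWithin] with u hu
    have hus : u ≠ s := hu
    have hK := hy.dist_le_mul u s
    rw [slope_def_module]
    rw [norm_smul, norm_inv, Real.norm_eq_abs]
    rw [dist_eq_norm] at hK
    have h1 : |u - s| > 0 := abs_pos.mpr (sub_ne_zero.mpr hus)
    rw [inv_mul_le_iff₀ h1]
    calc ‖y u - y s‖ ≤ K * dist u s := hK
    _ = |u - s| * K := by rw [Real.dist_eq]; ring
  · rw [deriv_zero_of_not_differentiableAt h]
    simp

lemma lip_ftc {d : ℕ} {K : NNReal} {y : ℝ → Fin d → ℝ}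
    (hy : LipschitzWith K y) {a b : ℝ} (hab : a ≤ b) :
    ∫ s in Ioc a b, deriv y s = y b - y a := by
  have hyc : Continuous y := hy.continuous
  have hy_int : ∀ c e : ℝ, IntervalIntegrable y volume c e := fun c e =>
    hyc.intervalIntegrable c e
  set F : ℕ → ℝ → (Fin d → ℝ) := fun n s => ((n : ℝ) + 1) • (y (s + ((n : ℝ) + 1)⁻¹) - y s)
    with hF
  have step1 : Tendsto (fun n => ∫ s in Ioc a b, F n s) atTop
      (𝓝 (∫ s in Ioc a b, deriv y s)) := by
    apply tendsto_integral_of_dominated_convergence (fun _ => (K : ℝ))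
    · intro n
      have : Continuous (F n) := by
        have h1 : Continuous fun s => y (s + ((n : ℝ) + 1)⁻¹) := hyc.comp (continuous_add_right _)
        exact (h1.sub hyc).const_smul ((n : ℝ) + 1)
      exact this.aestronglyMeasurable
    · rw [integrable_const_iff]
      right
      constructor
      rw [Measure.restrict_apply_univ]
      exact measure_Ioc_lt_top
    · intro n
      filter_upwards with s
      have h1 : (0:ℝ) < (n : ℝ) + 1 := by positivity
      have hK := hy.dist_le_mul (s + ((n : ℝ) + 1)⁻¹) s
      rw [dist_eq_norm, Real.dist_eq] at hK
      have : |s + ((n : ℝ) + 1)⁻¹ - s| = ((n : ℝ) + 1)⁻¹ := by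
        rw [add_sub_cancel_left, abs_of_pos (by positivity)]
      rw [this] at hK
      rw [hF]
      simp only
      rw [norm_smul, Real.norm_eq_abs, abs_of_pos h1]
      calc ((n:ℝ)+1) * ‖y (s + ((n : ℝ) + 1)⁻¹) - y s‖ ≤ ((n:ℝ)+1) * (K * ((n : ℝ) + 1)⁻¹) := by
            exact mul_le_mul_of_nonneg_left hK (le_of_lt h1)
      _ = K := by field_simp
    · have hdiff := hy.ae_differentiableAt (μ := volume)
      refine ae_restrict_of_ae ?_
      filter_upwards [hdiff] with s hs
      have h' := hs.hasDerivAt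
      rw [hasDerivAt_iff_tendsto_slope] at h'
      have := h'.comp (tendsto_seq_nhdsNE s)
      apply this.congr
      intro n
      rw [Function.comp_apply, slope_def_module, hF]
      simp only [add_sub_cancel_left, inv_inv]
  have step2 : ∀ n : ℕ, ∫ s in Ioc a b, F n s =
      (((n : ℝ) + 1) • ∫ u in b..(b + ((n : ℝ) + 1)⁻¹), y u) -
      (((n : ℝ) + 1) • ∫ u in a..(a + ((n : ℝ) + 1)⁻¹), y u) := by
    intro n
    set h : ℝ := ((n : ℝ) + 1)⁻¹ with hh
    rw [← intervalIntegral.integral_of_le hab]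
    rw [hF]
    simp only
    rw [intervalIntegral.integral_smul]
    have hI : IntervalIntegrable (fun s => y (s + h)) volume a b := by
      exact (hyc.comp (continuous_add_right h)).intervalIntegrable a b
    rw [intervalIntegral.integral_sub hI (hy_int a b)]
    have hcomp : ∫ s in a..b, y (s + h) = ∫ u in (a+h)..(b+h), y u :=
      intervalIntegral.integral_comp_add_right y h
    rw [hcomp]
    have e1 : (∫ u in (a+h)..b, y u) + ∫ u in b..(b+h), y u = ∫ u in (a+h)..(b+h), y u :=
      intervalIntegral.integral_add_adjacent_intervals (hy_int _ _) (hy_int _ _)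
    have e2 : (∫ u in a..(a+h), y u) + ∫ u in (a+h)..b, y u = ∫ u in a..b, y u :=
      intervalIntegral.integral_add_adjacent_intervals (hy_int _ _) (hy_int _ _)
    rw [← e1, ← e2, smul_sub, smul_add, smul_add]
    abel
  have step3 : ∀ c : ℝ, Tendsto (fun n : ℕ =>
      ((n : ℝ) + 1) • ∫ u in c..(c + ((n : ℝ) + 1)⁻¹), y u) atTop (𝓝 (y c)) := by
    intro c
    have hG : HasDerivAt (fun u => ∫ x in c..u, y x) (y c) c := by
      apply intervalIntegral.integral_hasDerivAt_right (hy_int c c)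
      · exact hyc.stronglyMeasurable.stronglyMeasurableAtFilter
      · exact hyc.continuousAt
    rw [hasDerivAt_iff_tendsto_slope] at hG
    have := hG.comp (tendsto_seq_nhdsNE c)
    apply this.congr
    intro n
    rw [Function.comp_apply, slope_def_module]
    rw [intervalIntegral.integral_same, add_sub_cancel_left, inv_inv, sub_zero]
  have stepA : Tendsto (fun n => ∫ s in Ioc a b, F n s) atTop (𝓝 (y b - y a)) := by
    rw [funext step2]
    exact (step3 b).sub (step3 a)
  exact tendsto_nhds_unique step1 stepA
theorem dOrder_of_sdet' (d : ℕ) (x : ℝ → Fin d → ℝ) (K : NNReal)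
    (hlip : LipschitzOnWith K x (Icc 0 1))
    (hsdet : ∀ t : Fin d → ℝ, StrictMono t → (∀ i, t i ∈ Ioo (0 : ℝ) 1) →
      (∀ i, DifferentiableAt ℝ x (t i)) →
      0 < Matrix.det (Matrix.of fun i j => deriv x (t j) i)) :
    ∀ t : Fin (d + 1) → ℝ, StrictMono t → (∀ i, t i ∈ Icc (0 : ℝ) 1) →
    0 < Matrix.det (Matrix.of fun i j => Fin.cons (1 : ℝ) (x (t j)) i) := by
  intro t ht ht01
  -- the Lipschitz extension of `x` to all of `ℝ`
  set y : ℝ → Fin d → ℝ := ((Icc (0:ℝ) 1).restrict x) ∘ (projIcc (0:ℝ) 1 zero_le_one) with hy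
  have hy_lip : LipschitzWith K y := by
    have h2 : LipschitzWith K ((Icc (0:ℝ) 1).restrict x) := lipschitzOnWith_iff_restrict.mp hlip
    have := h2.comp (LipschitzWith.projIcc zero_le_one)
    rwa [mul_one] at this
  have hy_eq : ∀ s ∈ Icc (0:ℝ) 1, y s = x s := by
    intro s hs
    simp only [hy, Function.comp_apply, Set.restrict_apply, projIcc_of_mem zero_le_one hs]
    rfl
  have hbound : ∀ s, ‖deriv y s‖ ≤ K := lip_norm_deriv_le hy_lip
  have hmeas_deriv : Measurable (deriv y) := measurable_deriv y
  have hIoc_lt : ∀ j : Fin d, t j.castSucc < t j.succ := fun j => ht (Fin.castSucc_lt_succ (i := j))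
  -- the indicator columns
  set g : Fin d → ℝ → Fin d → ℝ :=
    fun j => (Ioc (t j.castSucc) (t j.succ)).indicator (deriv y) with hg
  have hgint : ∀ j : Fin d, Integrable (g j) volume := by
    intro j
    rw [hg]
    simp only
    rw [integrable_indicator_iff measurableSet_Ioc]
    have hc : Integrable (fun _ : ℝ => (K:ℝ))
        (volume.restrict (Ioc (t j.castSucc) (t j.succ))) := by
      rw [integrable_const_iff]
      right
      constructor
      rw [Measure.restrict_apply_univ]
      exact measure_Ioc_lt_top
    exact Integrable.mono' hc hmeas_deriv.aestronglyMeasurable.restrict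
      (Filter.Eventually.of_forall fun s => hbound s)
  have hgint_c : ∀ j i : Fin d, Integrable (fun u => g j u i) volume := by
    intro j i
    have := (ContinuousLinearMap.proj (R := ℝ) (φ := fun _ : Fin d => ℝ) i).integrable_comp
      (hgint j)
    simpa using this
  -- FTC on each column
  have hcol : ∀ j i : Fin d, x (t j.succ) i - x (t j.castSucc) i = ∫ s, g j s i := by
    intro j i
    have h0 : t j.castSucc ∈ Icc (0:ℝ) 1 := ht01 _
    have h1 : t j.succ ∈ Icc (0:ℝ) 1 := ht01 _
    have hftc := lip_ftc hy_lip (le_of_lt (hIoc_lt j))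
    have hv : (∫ s, g j s) = y (t j.succ) - y (t j.castSucc) := by
      rw [hg]
      simp only
      rw [MeasureTheory.integral_indicator measurableSet_Ioc, hftc]
    have hcomp := (ContinuousLinearMap.proj (R := ℝ) (φ := fun _ : Fin d => ℝ) i).integral_comp_comm
      (hgint j)
    calc x (t j.succ) i - x (t j.castSucc) i
        = y (t j.succ) i - y (t j.castSucc) i := by rw [hy_eq _ h1, hy_eq _ h0]
      _ = (∫ s, g j s) i := by rw [hv]; rfl
      _ = ∫ s, g j s i := by
          have : (∫ s, g j s) i = (ContinuousLinearMap.proj (R := ℝ) (φ := fun _ : Fin d => ℝ) i)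
              (∫ s, g j s) := rfl
          rw [this, ← hcomp]
          rfl
  -- rewrite the determinant
  rw [det_ones_row (fun j => x (t j))]
  have hN : (Matrix.of fun (i j : Fin d) => x (t j.succ) i - x (t j.castSucc) i) =
      Matrix.of fun (i j : Fin d) => ∫ s, g j s i := by
    ext i j
    exact hcol j i
  rw [hN, det_integral_columns g hgint_c]
  -- the product set
  set S : Set (Fin d → ℝ) := univ.pi (fun j => Ioc (t j.castSucc) (t j.succ)) with hS
  have hSmeas : MeasurableSet S := MeasurableSet.univ_pi fun j => measurableSet_Ioc
  set F : (Fin d → ℝ) → ℝ := fun s => Matrix.det (Matrix.of fun i j => deriv y (s j) i)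
    with hFdef
  have hptwise : ∀ s : Fin d → ℝ,
      Matrix.det (Matrix.of fun i j => g j (s j) i) = S.indicator F s := by
    intro s
    by_cases hs : s ∈ S
    · rw [indicator_of_mem hs, hFdef]
      have : (Matrix.of fun (i j : Fin d) => g j (s j) i) =
          Matrix.of fun (i j : Fin d) => deriv y (s j) i := by
        ext i j
        have hmem : s j ∈ Ioc (t j.castSucc) (t j.succ) := hs j (mem_univ j)
        simp only [hg, Matrix.of_apply]
        rw [indicator_of_mem hmem]
      rw [this]
    · rw [indicator_of_notMem hs]
      obtain ⟨j, hj⟩ : ∃ j, s j ∉ Ioc (t j.castSucc) (t j.succ) := by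
        by_contra hcon
        push_neg at hcon
        exact hs (fun j _ => hcon j)
      apply Matrix.det_eq_zero_of_column_eq_zero j
      intro i
      simp only [hg, Matrix.of_apply]
      rw [indicator_of_notMem hj]
      rfl
  have hindic : (fun s : Fin d → ℝ => Matrix.det (Matrix.of fun i j => g j (s j) i)) =
      fun s => S.indicator F s := funext hptwise
  rw [hindic, MeasureTheory.integral_indicator hSmeas]
  -- measurability and boundedness of `F`
  have hFmeas : Measurable F := by
    rw [hFdef]
    simp only [Matrix.det_apply', Matrix.of_apply]
    refine Finset.measurable_sum _ (fun σ _ => Measurable.const_mul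
      (Finset.measurable_prod _ (fun i _ => ?_)) _)
    exact (measurable_pi_apply (σ i)).comp (hmeas_deriv.comp (measurable_pi_apply i))
  have hFbd : ∀ s, |F s| ≤ (Nat.factorial d : ℝ) * (K:ℝ)^d := by
    intro s
    have hentry : ∀ i j : Fin d,
        (AbsoluteValue.abs : AbsoluteValue ℝ ℝ)
          ((Matrix.of fun (i j : Fin d) => deriv y (s j) i) i j) ≤ (K:ℝ) := by
      intro i j
      have h1 : ‖deriv y (s j) i‖ ≤ ‖deriv y (s j)‖ := norm_le_pi_norm _ i
      have h2 := hbound (s j)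
      simp only [AbsoluteValue.abs_apply, Matrix.of_apply]
      rw [Real.norm_eq_abs] at h1
      linarith
    have hdl := Matrix.det_le hentry
    simpa [Fintype.card_fin, nsmul_eq_mul, AbsoluteValue.abs_apply, hFdef] using hdl
  have hSvol : volume S = ∏ j : Fin d, volume (Ioc (t j.castSucc) (t j.succ)) := by
    rw [hS]
    exact volume_pi_pi _
  have hint_F : Integrable F (volume.restrict S) := by
    have hc : Integrable (fun _ : Fin d → ℝ => (Nat.factorial d : ℝ) * (K:ℝ)^d)
        (volume.restrict S) := by
      rw [integrable_const_iff]
      right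
      constructor
      rw [Measure.restrict_apply_univ, hSvol]
      exact ENNReal.prod_lt_top (fun j _ => measure_Ioc_lt_top)
    exact Integrable.mono' hc hFmeas.aestronglyMeasurable.restrict
      (Filter.Eventually.of_forall fun s => by rw [Real.norm_eq_abs]; exact hFbd s)
  -- a.e. facts
  have hae_diff : ∀ j : Fin d, ∀ᵐ s : (Fin d → ℝ) ∂volume, DifferentiableAt ℝ y (s j) := by
    intro j
    have hdiffy := hy_lip.ae_differentiableAt (μ := volume)
    rw [ae_iff] at hdiffy ⊢
    rw [volume_pi]
    have hset0 : {s : Fin d → ℝ | ¬ DifferentiableAt ℝ y (s j)} =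
        (Function.eval j : (Fin d → ℝ) → ℝ) ⁻¹' {u : ℝ | ¬ DifferentiableAt ℝ y u} := rfl
    rw [hset0]
    exact Measure.pi_eval_preimage_null _ hdiffy
  have hae_ne1 : ∀ j : Fin d, ∀ᵐ s : (Fin d → ℝ) ∂volume, s j ≠ (1:ℝ) := by
    intro j
    rw [ae_iff, volume_pi]
    have hset : {s : Fin d → ℝ | ¬ s j ≠ 1} =
        (Function.eval j : (Fin d → ℝ) → ℝ) ⁻¹' {(1:ℝ)} := by
      ext s; simp [Function.eval]
    rw [hset]
    exact Measure.pi_eval_preimage_null _ (measure_singleton 1)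
  have hpos_ae : ∀ᵐ s ∂(volume.restrict S), 0 < F s := by
    have h1 : ∀ᵐ s ∂(volume.restrict S), ∀ j, DifferentiableAt ℝ y (s j) :=
      ae_restrict_of_ae (ae_all_iff.mpr hae_diff)
    have h2 : ∀ᵐ s ∂(volume.restrict S), ∀ j, s j ≠ (1:ℝ) :=
      ae_restrict_of_ae (ae_all_iff.mpr hae_ne1)
    have h3 : ∀ᵐ s ∂(volume.restrict S), s ∈ S := ae_restrict_mem hSmeas
    filter_upwards [h1, h2, h3] with s hdiffs hne1 hsS
    have hmem : ∀ j, s j ∈ Ioc (t j.castSucc) (t j.succ) := fun j => hsS j (mem_univ j)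
    have hIoo : ∀ j, s j ∈ Ioo (0:ℝ) 1 := by
      intro j
      constructor
      · have h4 := (hmem j).1
        have h5 : (0:ℝ) ≤ t j.castSucc := (ht01 _).1
        linarith
      · have h4 := (hmem j).2
        have h5 : t j.succ ≤ 1 := (ht01 _).2
        exact lt_of_le_of_ne (le_trans h4 h5) (hne1 j)
    have hsm : StrictMono s := by
      intro k k' hkk'
      have h4 : s k ≤ t k.succ := (hmem k).2
      have h5 : t k'.castSucc < s k' := (hmem k').1
      have h6 : t k.succ ≤ t k'.castSucc := by
        apply ht.monotone
        have hkn : (k:ℕ) < (k':ℕ) := hkk'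
        rw [Fin.le_def]
        simp only [Fin.val_succ, Fin.coe_castSucc]
        omega
      linarith
    have hxy : ∀ j : Fin d, x =ᶠ[𝓝 (s j)] y := by
      intro j
      filter_upwards [isOpen_Ioo.mem_nhds (hIoo j)] with u hu
      exact (hy_eq u (Ioo_subset_Icc_self hu)).symm
    have hdx : ∀ j, DifferentiableAt ℝ x (s j) := fun j =>
      ((hxy j).differentiableAt_iff).mpr (hdiffs j)
    have hdeq : ∀ j, deriv x (s j) = deriv y (s j) := fun j => (hxy j).deriv_eq
    have hpos := hsdet s hsm hIoo hdx
    rw [hFdef]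
    simp only
    have hmx : (Matrix.of fun (i j : Fin d) => deriv y (s j) i) =
        Matrix.of fun (i j : Fin d) => deriv x (s j) i := by
      ext i j
      simp only [Matrix.of_apply]
      rw [hdeq]
    rw [hmx]
    exact hpos
  -- conclude positivity
  rw [integral_pos_iff_support_of_nonneg_ae (hpos_ae.mono fun s hs => le_of_lt hs) hint_F]
  have hbadnull : (volume.restrict S) {s | ¬ 0 < F s} = 0 := ae_iff.mp hpos_ae
  have hsub : univ \ {s | ¬ 0 < F s} ⊆ Function.support F := by
    intro s hs
    have hFs : 0 < F s := by
      have := hs.2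
      simp only [mem_setOf_eq, not_not] at this
      exact this
    exact fun h0 => by rw [h0] at hFs; exact lt_irrefl 0 hFs
  calc (0:ENNReal) < (volume.restrict S) univ := by
        rw [Measure.restrict_apply_univ, hSvol]
        apply CanonicallyOrderedAdd.prod_pos.mpr
        intro j _
        rw [Real.volume_Ioc]
        exact ENNReal.ofReal_pos.mpr (sub_pos.mpr (hIoc_lt j))
    _ = (volume.restrict S) (univ \ {s | ¬ 0 < F s}) := (measure_diff_null hbadnull).symm
    _ ≤ (volume.restrict S) (Function.support F) := measure_mono hsub

end AuxDOrder

/-- A Lipschitz path satisfying the strictly positive determinant condition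
(at points of differentiability) is a `d`-order path. -/
theorem dOrder_of_sdet (d : ℕ) (x : ℝ → Fin d → ℝ) (K : NNReal)
    (hlip : LipschitzOnWith K x (Icc 0 1))
    (hsdet : ∀ t : Fin d → ℝ, StrictMono t → (∀ i, t i ∈ Ioo (0 : ℝ) 1) →
      (∀ i, DifferentiableAt ℝ x (t i)) →
      0 < Matrix.det (Matrix.of fun i j => deriv x (t j) i)) :
    IsDOrderPath d x :=
  dOrder_of_sdet' d x K hlip hsdet
end
end

section
/- The planar path x : [0,1] → ℝ² defined by x(t) = (t, (t − 0.5)^4) satisfies the strictly positive determinant condition, i.e., det(x'(t_1), x'(t_2)) > 0 whenever 0 < t_1 < t_2 < 1, but it does not have totally positive torsion: the determinant of the matrix (x'(t), x''(t)) vanishes at t = 0.5. -/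
open MeasureTheory Set Filter

noncomputable section

lemma aux_hasDerivAt (t : ℝ) :
    HasDerivAt (fun s : ℝ => (![s, (s - 1/2) ^ 4] : Fin 2 → ℝ))
      (![1, 4 * (t - 1/2) ^ 3]) t := by
  rw [hasDerivAt_pi]
  intro i
  fin_cases i
  · simpa using (hasDerivAt_id' t)
  · have h : HasDerivAt (fun s : ℝ => (s - 1/2) ^ 4)
        ((4 : ℕ) * (t - 1/2) ^ 3 * 1) t :=
      ((hasDerivAt_id t).sub_const (1/2)).pow 4
    simpa using h

lemma aux_deriv :
    deriv (fun s : ℝ => (![s, (s - 1/2) ^ 4] : Fin 2 → ℝ)) =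
      fun t => ![1, 4 * (t - 1/2) ^ 3] := by
  funext t
  exact (aux_hasDerivAt t).deriv

lemma aux_hasDerivAt2 (t : ℝ) :
    HasDerivAt (fun s : ℝ => (![1, 4 * (s - 1/2) ^ 3] : Fin 2 → ℝ))
      (![0, 12 * (t - 1/2) ^ 2]) t := by
  rw [hasDerivAt_pi]
  intro i
  fin_cases i
  · simpa using (hasDerivAt_const t (1:ℝ))
  · have h : HasDerivAt (fun s : ℝ => (s - 1/2) ^ 3)
        ((3 : ℕ) * (t - 1/2) ^ 2 * 1) t :=
      ((hasDerivAt_id t).sub_const (1/2)).pow 3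
    have := h.const_mul (4 : ℝ)
    simpa using this.congr_deriv (by push_cast; ring)

/-- The path `x(t) = (t, (t - 1/2)^4)` satisfies the strictly positive
determinant condition, but the determinant of `(x'(t), x''(t))` vanishes at `t = 1/2`,
so it does not have totally positive torsion. -/
theorem sdet_example_not_tpt (x : ℝ → Fin 2 → ℝ)
    (hx : x = fun t => ![t, (t - 1/2) ^ 4]) :
    (∀ t₁ t₂ : ℝ, 0 < t₁ → t₁ < t₂ → t₂ < 1 →
      0 < Matrix.det (Matrix.of fun i j => deriv x (![t₁, t₂] j) i)) ∧
    Matrix.det (Matrix.of fun i j : Fin 2 =>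
      iteratedDeriv ((j : ℕ) + 1) x (1/2) i) = 0 := by
  subst hx
  constructor
  · intro t₁ t₂ h0 h12 h1
    rw [Matrix.det_fin_two]
    simp only [Matrix.of_apply, Matrix.cons_val_zero, Matrix.cons_val_one, Matrix.head_cons,
      aux_deriv]
    have hc : (t₁ - 1/2) ^ 3 < (t₂ - 1/2) ^ 3 := by
      have := Odd.strictMono_pow (R := ℝ) (⟨1, by norm_num⟩ : Odd 3)
      exact this (by linarith)
    nlinarith
  · rw [Matrix.det_fin_two]
    have h1 : iteratedDeriv 1 (fun t : ℝ => (![t, (t - 1/2) ^ 4] : Fin 2 → ℝ)) =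
        fun t => ![1, 4 * (t - 1/2) ^ 3] := by
      rw [iteratedDeriv_one, aux_deriv]
    have h2 : iteratedDeriv 2 (fun t : ℝ => (![t, (t - 1/2) ^ 4] : Fin 2 → ℝ)) (1/2) =
        ![0, 12 * ((1:ℝ)/2 - 1/2) ^ 2] := by
      rw [iteratedDeriv_succ, h1]
      exact (aux_hasDerivAt2 (1/2)).deriv
    simp only [Matrix.of_apply]
    norm_num [h1, h2]
end
end

section
/- Fix d distinct positive real numbers a_1, …, a_d. The logarithmic curve x : [0,1] → ℝ^d defined by x(t) = (log(1 + a_1 t), …, log(1 + a_d t)) is a d-order curve; that is, no affine hyperplane in ℝ^d intersects its image in more than d points. Equivalently, for all 0 ≤ t_0 < … < t_d ≤ 1, the (d+1)×(d+1) matrix with columns (x(t_0),1), …, (x(t_d),1) is nonsingular. -/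
open MeasureTheory Set Filter

noncomputable section

/-- Key analytic lemma: a combination `∑ bᵢ log(1 + aᵢ u) + c₀` with `d + 1` zeros
at nonnegative increasing points must be trivial. -/
lemma log_comb_zeros (d : ℕ) (a : Fin d → ℝ) (hpos : ∀ i, 0 < a i)
    (hdist : Function.Injective a) (b : Fin d → ℝ) (c0 : ℝ) (t : Fin (d + 1) → ℝ)
    (ht : StrictMono t) (ht0 : ∀ j, 0 ≤ t j)
    (hzero : ∀ j, (∑ i, b i * Real.log (1 + a i * t j)) + c0 = 0) :
    (∀ i, b i = 0) ∧ c0 = 0 := by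
  classical
  have hpos' : ∀ (i : Fin d) (u : ℝ), 0 ≤ u → 0 < 1 + a i * u := by
    intro i u hu
    nlinarith [mul_nonneg (hpos i).le hu]
  set f : ℝ → ℝ := fun u => (∑ i, b i * Real.log (1 + a i * u)) + c0 with hf
  set g : ℝ → ℝ := fun u => ∑ i, b i * (a i / (1 + a i * u)) with hg
  have hderiv : ∀ u : ℝ, 0 ≤ u → HasDerivAt f (g u) u := by
    intro u hu
    have hsum : HasDerivAt (fun u => ∑ i, b i * Real.log (1 + a i * u))
        (∑ i, b i * (a i / (1 + a i * u))) u := by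
      apply HasDerivAt.fun_sum
      intro i _
      have h1 : HasDerivAt (fun u : ℝ => 1 + a i * u) (a i) u := by
        simpa using ((hasDerivAt_id u).const_mul (a i)).const_add (1 : ℝ)
      have h2 := (Real.hasDerivAt_log (ne_of_gt (hpos' i u hu))).comp u h1
      have h3 := h2.const_mul (b i)
      exact h3.congr_deriv (by ring)
    exact hsum.add_const c0
  have hb : ∀ i, b i = 0 := by
    intro i
    have hd : 0 < d := i.pos
    -- Rolle: get d zeros of g strictly between the zeros of f
    have hroll : ∀ j : Fin d, ∃ s ∈ Ioo (t j.castSucc) (t j.succ), g s = 0 := by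
      intro j
      have hlt : t j.castSucc < t j.succ := ht Fin.castSucc_lt_succ
      refine exists_hasDerivAt_eq_zero (f := f) (f' := g) hlt ?_ ?_ ?_
      · intro u hu
        exact ((hderiv u ((ht0 _).trans hu.1)).continuousAt).continuousWithinAt
      · rw [show f (t j.castSucc) = 0 from hzero _, show f (t j.succ) = 0 from hzero _]
      · intro u hu
        exact hderiv u ((ht0 _).trans hu.1.le)
    choose s hs hgs using hroll
    have hs0 : ∀ j, 0 ≤ s j := fun j => ((ht0 _).trans (hs j).1.le)
    have hsmono : StrictMono s := by
      intro j j' h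
      have hle : (j.succ : Fin (d + 1)) ≤ j'.castSucc := by
        rw [Fin.le_def]
        simp only [Fin.val_succ, Fin.coe_castSucc]
        exact h
      exact (hs j).2.trans_le ((ht.monotone hle).trans (hs j').1.le)
    set P : Polynomial ℝ := ∑ k : Fin d, Polynomial.C (b k * a k) *
        ∏ m ∈ Finset.univ.erase k, (1 + Polynomial.C (a m) * Polynomial.X) with hP
    have hPeval : ∀ u : ℝ, P.eval u =
        ∑ k : Fin d, (b k * a k) * ∏ m ∈ Finset.univ.erase k, (1 + a m * u) := by
      intro u
      simp [hP, Polynomial.eval_finset_sum, Polynomial.eval_prod]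
    have hPdeg : P.natDegree < d := by
      have : P.natDegree ≤ d - 1 := by
        apply Polynomial.natDegree_sum_le_of_forall_le
        intro k _
        refine (Polynomial.natDegree_mul_le).trans ?_
        have h1 : (Polynomial.C (b k * a k)).natDegree = 0 := Polynomial.natDegree_C _
        have h2 : (∏ m ∈ Finset.univ.erase k,
            (1 + Polynomial.C (a m) * Polynomial.X)).natDegree ≤ d - 1 := by
          refine (Polynomial.natDegree_prod_le _ _).trans ?_
          have : ∀ m ∈ Finset.univ.erase k,
              (1 + Polynomial.C (a m) * Polynomial.X).natDegree ≤ 1 := by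
            intro m _
            refine (Polynomial.natDegree_add_le _ _).trans ?_
            simp only [Polynomial.natDegree_one, max_le_iff]
            exact ⟨Nat.zero_le _, (Polynomial.natDegree_C_mul_le _ _).trans
              (by simp [Polynomial.natDegree_X])⟩
          refine (Finset.sum_le_card_nsmul _ _ 1 this).trans ?_
          simp [Finset.card_erase_of_mem]
        omega
      omega
    have hPs : ∀ j : Fin d, P.eval (s j) = 0 := by
      intro j
      have hne : ∀ k : Fin d, (1 + a k * s j) ≠ 0 := fun k => ne_of_gt (hpos' k _ (hs0 j))
      rw [hPeval]
      have step : ∀ k : Fin d, (b k * a k) * ∏ m ∈ Finset.univ.erase k, (1 + a m * s j)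
          = (b k * (a k / (1 + a k * s j))) * ∏ m : Fin d, (1 + a m * s j) := by
        intro k
        rw [← Finset.mul_prod_erase Finset.univ _ (Finset.mem_univ k)]
        have h4 : a k / (1 + a k * s j) * (1 + a k * s j) = a k :=
          div_mul_cancel₀ _ (hne k)
        calc b k * a k * ∏ m ∈ Finset.univ.erase k, (1 + a m * s j)
            = b k * (a k / (1 + a k * s j) * (1 + a k * s j)) *
              ∏ m ∈ Finset.univ.erase k, (1 + a m * s j) := by rw [h4]
          _ = (b k * (a k / (1 + a k * s j))) * ((1 + a k * s j) *
              ∏ m ∈ Finset.univ.erase k, (1 + a m * s j)) := by ring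
      rw [Finset.sum_congr rfl fun k _ => step k, ← Finset.sum_mul]
      rw [show (∑ k : Fin d, b k * (a k / (1 + a k * s j))) = g (s j) from rfl, hgs j,
        zero_mul]
    have hP0 : P = 0 :=
      Polynomial.eq_zero_of_natDegree_lt_card_of_eval_eq_zero P hsmono.injective hPs
        (by simpa using hPdeg)
    have heval := hPeval (-(a i)⁻¹)
    rw [hP0] at heval
    simp only [Polynomial.eval_zero] at heval
    have hsingle : (0 : ℝ) = (b i * a i) * ∏ m ∈ Finset.univ.erase i,
        (1 + a m * (-(a i)⁻¹)) := by
      rw [heval, Finset.sum_eq_single i]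
      · intro k _ hk
        have : (1 : ℝ) + a i * (-(a i)⁻¹) = 0 := by
          rw [mul_neg, mul_inv_cancel₀ (hpos i).ne']; ring
        rw [Finset.prod_eq_zero (Finset.mem_erase.2 ⟨fun h => hk h.symm, Finset.mem_univ i⟩)
          this, mul_zero]
      · intro h
        exact absurd (Finset.mem_univ i) h
    have hprodne : (∏ m ∈ Finset.univ.erase i, (1 + a m * (-(a i)⁻¹))) ≠ 0 := by
      apply Finset.prod_ne_zero_iff.2
      intro m hm
      intro h0
      have hmi : m ≠ i := (Finset.mem_erase.1 hm).1
      have hai : a i ≠ 0 := (hpos i).ne'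
      have : a m = a i := by
        field_simp at h0
        linarith
      exact hmi (hdist this)
    have := hsingle.symm
    rcases mul_eq_zero.1 this with h | h
    · rcases mul_eq_zero.1 h with h' | h'
      · exact h'
      · exact absurd h' (hpos i).ne'
    · exact absurd h hprodne
  refine ⟨hb, ?_⟩
  have := hzero 0
  simp only [hb, zero_mul, Finset.sum_const_zero, zero_add] at this
  exact this

/-- The logarithmic curve `x(t) = (log(1 + a₁ t), …, log(1 + a_d t))` with
distinct positive parameters is a `d`-order curve: for all `0 ≤ t₀ < ⋯ < t_d ≤ 1` the
`(d+1) × (d+1)` matrix with columns `(x(t_j), 1)` is nonsingular. -/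
theorem log_curve_is_dOrder (d : ℕ) (a : Fin d → ℝ) (hpos : ∀ i, 0 < a i)
    (hdist : Function.Injective a) (x : ℝ → Fin d → ℝ)
    (hx : x = fun t i => Real.log (1 + a i * t)) :
    ∀ t : Fin (d + 1) → ℝ, StrictMono t → (∀ i, t i ∈ Icc (0 : ℝ) 1) →
      Matrix.det (Matrix.of fun i j => Fin.snoc (x (t j)) (1 : ℝ) i) ≠ 0 := by
  classical
  intro t ht htI hdet
  obtain ⟨c, hc0, hc⟩ := (Matrix.exists_vecMul_eq_zero_iff).2 hdet
  have hrow : ∀ j, (∑ i : Fin d, c i.castSucc * Real.log (1 + a i * t j))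
      + c (Fin.last d) = 0 := by
    intro j
    have := congrFun hc j
    simp only [Matrix.vecMul, dotProduct, Matrix.of_apply, Pi.zero_apply] at this
    rw [Fin.sum_univ_castSucc] at this
    simpa [hx, Fin.snoc_castSucc, Fin.snoc_last] using this
  obtain ⟨hb, hlast⟩ := log_comb_zeros d a hpos hdist (fun i => c i.castSucc)
    (c (Fin.last d)) t ht (fun j => (htI j).1) hrow
  apply hc0
  funext i
  refine Fin.lastCases ?_ ?_ i
  · exact hlast
  · exact hb
end
end

section
/- Consider the closed space curve x : [0,1] → ℝ³ given by x(t) = (cos 2πt, sin 2πt, cos 6πt). Its level-3 alternating signature vanishes, α^(3)(x) = (1/3!) ∫_{0 ≤ t_1 < t_2 < t_3 ≤ 1} det(x'(t_1), x'(t_2), x'(t_3)) dt = 0, while the volume of the convex hull of its image is strictly positive: vol(conv(x)) ≠ 0. In particular the image of x consists of extreme points of its convex hull, yet the signature volume formula fails for x. -/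
open MeasureTheory Set Filter

noncomputable section

namespace SigAux


/-- The derivative of the curve. -/
def D (u : ℝ) : Fin 3 → ℝ :=
  ![-(2 * Real.pi) * Real.sin (2 * Real.pi * u), (2 * Real.pi) * Real.cos (2 * Real.pi * u),
    -(6 * Real.pi) * Real.sin (6 * Real.pi * u)]

/-- The reversing involution. -/
def sig (t : Fin 3 → ℝ) : Fin 3 → ℝ := fun i => 1 - t i.rev

lemma sig_invol : Function.Involutive sig := by
  intro t; funext i; simp [sig, Fin.rev_rev]

lemma sig_measurable : Measurable sig :=
  measurable_pi_lambda _ fun i => (measurable_pi_apply _).const_sub 1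

/-- sig as a measurable equiv. -/
def sigE : (Fin 3 → ℝ) ≃ᵐ (Fin 3 → ℝ) where
  toFun := sig
  invFun := sig
  left_inv := sig_invol
  right_inv := sig_invol
  measurable_toFun := sig_measurable
  measurable_invFun := sig_measurable

lemma sig_mp : MeasurePreserving sig (volume : Measure (Fin 3 → ℝ)) volume := by
  have h1 := MeasureTheory.volume_measurePreserving_piCongrLeft (fun _ : Fin 3 => ℝ) Fin.revPerm
  have h2 := MeasureTheory.volume_preserving_pi
    (fun _ : Fin 3 => Measure.measurePreserving_sub_left (volume : Measure ℝ) 1)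
  have h := h2.comp h1
  have heq : (fun (a : Fin 3 → ℝ) (i : Fin 3) => 1 - a i) ∘
      (MeasurableEquiv.piCongrLeft (fun _ : Fin 3 => ℝ) Fin.revPerm) = sig := by
    funext t
    funext i
    have hi : Fin.revPerm (i.rev) = i := by simp [Fin.rev_rev]
    have h3 : (MeasurableEquiv.piCongrLeft (fun _ : Fin 3 => ℝ) Fin.revPerm) t i = t i.rev := by
      conv_lhs => rw [← hi]
      exact MeasurableEquiv.piCongrLeft_apply_apply Fin.revPerm (β := fun _ : Fin 3 => ℝ) t i.rev
    simp only [Function.comp_apply, sig, h3]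
  rwa [heq] at h



lemma sig_mem {t : Fin 3 → ℝ} (ht : t ∈ orderedSimplex 3) : sig t ∈ orderedSimplex 3 := by
  obtain ⟨h1, h2⟩ := ht
  constructor
  · intro i j hij
    have : t j.rev < t i.rev := h1 (Fin.rev_lt_rev.mpr hij)
    simp only [sig]
    linarith
  · intro i
    have := h2 i.rev
    simp only [mem_Icc] at this ⊢
    simp only [sig]
    constructor <;> linarith [this.1, this.2]

lemma sig_preimage : sig ⁻¹' orderedSimplex 3 = orderedSimplex 3 := by
  ext t
  constructor
  · intro h
    have := sig_mem h
    rwa [sig_invol t] at this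
  · exact fun h => sig_mem h

lemma hasDerivAt_curve (u : ℝ) :
    HasDerivAt (fun t => ![Real.cos (2 * Real.pi * t), Real.sin (2 * Real.pi * t),
      Real.cos (6 * Real.pi * t)]) (D u) u := by
  rw [hasDerivAt_pi]
  have h2 : HasDerivAt (fun t : ℝ => 2 * Real.pi * t) (2 * Real.pi) u := by
    simpa using (hasDerivAt_id u).const_mul (2 * Real.pi)
  have h6 : HasDerivAt (fun t : ℝ => 6 * Real.pi * t) (6 * Real.pi) u := by
    simpa using (hasDerivAt_id u).const_mul (6 * Real.pi)
  intro i
  fin_cases i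
  · simpa [D, mul_comm] using h2.cos
  · simpa [D, mul_comm] using h2.sin
  · simpa [D, mul_comm] using h6.cos

lemma s2 (a : ℝ) : Real.sin (2 * Real.pi * (1 - a)) = -Real.sin (2 * Real.pi * a) := by
  rw [mul_sub, mul_one, Real.sin_two_pi_sub]

lemma c2 (a : ℝ) : Real.cos (2 * Real.pi * (1 - a)) = Real.cos (2 * Real.pi * a) := by
  rw [mul_sub, mul_one, Real.cos_two_pi_sub]

lemma s6 (a : ℝ) : Real.sin (6 * Real.pi * (1 - a)) = -Real.sin (6 * Real.pi * a) := by
  rw [show 6 * Real.pi * (1 - a) = (2 * Real.pi - 6 * Real.pi * a) + 2 * Real.pi + 2 * Real.pi by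
    ring, Real.sin_add_two_pi, Real.sin_add_two_pi, Real.sin_two_pi_sub]

lemma key (t : Fin 3 → ℝ) :
    Matrix.det (Matrix.of fun i j => D (sig t j) i) =
      -Matrix.det (Matrix.of fun i j => D (t j) i) := by
  have r0 : (0 : Fin 3).rev = 2 := by decide
  have r1 : (1 : Fin 3).rev = 1 := by decide
  have r2 : (2 : Fin 3).rev = 0 := by decide
  have e0 : sig t 0 = 1 - t 2 := by simp only [sig, r0]
  have e1 : sig t 1 = 1 - t 1 := by simp only [sig, r1]
  have e2 : sig t 2 = 1 - t 0 := by simp only [sig, r2]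
  simp only [Matrix.det_fin_three, Matrix.of_apply, D, e0, e1, e2,
    Matrix.cons_val_zero, Matrix.cons_val_one, Matrix.head_cons,
    Matrix.cons_val_two, Matrix.tail_cons, s2, c2, s6]
  ring


lemma integral_zero (x : ℝ → Fin 3 → ℝ)
    (hx : x = fun t => ![Real.cos (2 * Real.pi * t), Real.sin (2 * Real.pi * t),
      Real.cos (6 * Real.pi * t)]) :
    ∫ t in orderedSimplex 3, Matrix.det (Matrix.of fun i j => deriv x (t j) i) = 0 := by
  have hd : ∀ u, deriv x u = D u := fun u => by rw [hx]; exact (hasDerivAt_curve u).deriv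
  simp only [hd]
  have hemb : MeasurableEmbedding sig := sigE.measurableEmbedding
  have h := sig_mp.setIntegral_preimage_emb hemb
      (fun t => Matrix.det (Matrix.of fun i j => D (t j) i)) (orderedSimplex 3)
  rw [sig_preimage] at h
  simp only [key] at h
  rw [integral_neg] at h
  linarith


def q : Fin 4 → (Fin 3 → ℝ) :=
  ![![1, 0, 1], ![-1, 0, -1], ![0, 1, 0], ![Real.sqrt 3 / 2, 1 / 2, 0]]

def eSub : Fin 3 ≃ {i : Fin 4 // i ≠ 0} where
  toFun i := ⟨i.succ, Fin.succ_ne_zero i⟩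
  invFun j := j.1.pred j.2
  left_inv i := by simp
  right_inv j := by simp

def A : Matrix (Fin 3) (Fin 3) ℝ :=
  Matrix.of ![![-2, 0, -2], ![-1, 1, -1], ![Real.sqrt 3 / 2 - 1, 1 / 2, -1]]

lemma detA : A.det = Real.sqrt 3 := by
  simp [A, Matrix.det_fin_three, Matrix.cons_val_zero, Matrix.cons_val_one, Matrix.head_cons,
    Matrix.cons_val_two, Matrix.tail_cons, Matrix.of_apply, Matrix.vecHead, Matrix.vecTail]
  ring

lemma hqA : (fun i : Fin 3 => q (eSub i : Fin 4) -ᵥ q 0) = fun i => A i := by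
  funext i j
  fin_cases i <;> fin_cases j <;>
    simp [q, A, eSub, vsub_eq_sub, Pi.sub_apply, Matrix.cons_val_zero, Matrix.cons_val_one,
      Matrix.head_cons, Matrix.cons_val_two, Matrix.tail_cons, Matrix.of_apply, Matrix.vecHead, Matrix.vecTail] <;> norm_num

lemma q_affineIndependent : AffineIndependent ℝ q := by
  rw [affineIndependent_iff_linearIndependent_vsub ℝ q 0]
  rw [← linearIndependent_equiv eSub]
  have : (fun j : {i : Fin 4 // i ≠ 0} => q j -ᵥ q 0) ∘ eSub = fun i => A i := hqA
  rw [this]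
  refine Matrix.linearIndependent_rows_iff_isUnit.mpr ?_
  rw [Matrix.isUnit_iff_isUnit_det]
  change IsUnit A.det
  rw [detA, isUnit_iff_ne_zero]
  positivity

lemma q_span : affineSpan ℝ (Set.range q) = ⊤ := by
  rw [q_affineIndependent.affineSpan_eq_top_iff_card_eq_finrank_add_one]
  simp


lemma range_q_subset (x : ℝ → Fin 3 → ℝ)
    (hx : x = fun t => ![Real.cos (2 * Real.pi * t), Real.sin (2 * Real.pi * t),
      Real.cos (6 * Real.pi * t)]) :
    Set.range q ⊆ x '' Icc 0 1 := by
  rintro y ⟨i, rfl⟩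
  fin_cases i
  · refine ⟨0, by norm_num, ?_⟩
    rw [hx]; funext j; fin_cases j <;> simp [q, Matrix.vecHead, Matrix.vecTail]
  · refine ⟨1/2, by norm_num, ?_⟩
    rw [hx]; funext j; fin_cases j <;> simp [q, Matrix.vecHead, Matrix.vecTail]
    · rw [show 2 * Real.pi * (2⁻¹ : ℝ) = Real.pi by ring, Real.cos_pi]
    · rw [show 2 * Real.pi * (2⁻¹ : ℝ) = Real.pi by ring, Real.sin_pi]
    · rw [show 6 * Real.pi * (2⁻¹ : ℝ) = Real.pi + 2 * Real.pi by ring, Real.cos_add_two_pi,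
        Real.cos_pi]
  · refine ⟨1/4, by norm_num, ?_⟩
    rw [hx]; funext j; fin_cases j <;> simp [q, Matrix.vecHead, Matrix.vecTail]
    · rw [show 2 * Real.pi * (4⁻¹ : ℝ) = Real.pi / 2 by ring, Real.cos_pi_div_two]
    · rw [show 2 * Real.pi * (4⁻¹ : ℝ) = Real.pi / 2 by ring, Real.sin_pi_div_two]
    · rw [show 6 * Real.pi * (4⁻¹ : ℝ) = 2 * Real.pi - Real.pi / 2 by ring,
        Real.cos_two_pi_sub, Real.cos_pi_div_two]
  · refine ⟨1/12, by norm_num, ?_⟩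
    rw [hx]; funext j; fin_cases j <;> simp [q, Matrix.vecHead, Matrix.vecTail]
    · rw [show 2 * Real.pi * (12⁻¹ : ℝ) = Real.pi / 6 by ring, Real.cos_pi_div_six]
    · rw [show 2 * Real.pi * (12⁻¹ : ℝ) = Real.pi / 6 by ring, Real.sin_pi_div_six]; norm_num
    · rw [show 6 * Real.pi * (12⁻¹ : ℝ) = Real.pi / 2 by ring, Real.cos_pi_div_two]

lemma volume_pos (x : ℝ → Fin 3 → ℝ)
    (hx : x = fun t => ![Real.cos (2 * Real.pi * t), Real.sin (2 * Real.pi * t),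
      Real.cos (6 * Real.pi * t)]) :
    (volume (convexHull ℝ (x '' Icc 0 1))).toReal ≠ 0 := by
  have hcont : Continuous x := by
    rw [hx]
    refine continuous_pi fun i => ?_
    fin_cases i <;> simp <;> fun_prop
  have htop : affineSpan ℝ (x '' Icc 0 1) = ⊤ :=
    top_unique (q_span ▸ affineSpan_mono ℝ (range_q_subset x hx))
  have hint : (interior (convexHull ℝ (x '' Icc 0 1))).Nonempty := by
    rw [(convex_convexHull ℝ _).interior_nonempty_iff_affineSpan_eq_top,
      affineSpan_convexHull]
    exact htop
  have hpos : 0 < volume (convexHull ℝ (x '' Icc 0 1)) :=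
    MeasureTheory.Measure.measure_pos_of_nonempty_interior _ hint
  have hb : Bornology.IsBounded (convexHull ℝ (x '' Icc 0 1)) :=
    isBounded_convexHull.mpr (isCompact_Icc.image hcont).isBounded
  exact ENNReal.toReal_ne_zero.mpr ⟨hpos.ne', hb.measure_lt_top.ne⟩

end SigAux

/-- For the closed curve `x(t) = (cos 2πt, sin 2πt, cos 6πt)` the level-3
alternating signature vanishes while the volume of the convex hull of its image does not;
in particular the signature volume formula fails for `x`. -/
theorem closed_curve_altSig_zero_volume_pos (x : ℝ → Fin 3 → ℝ)
    (hx : x = fun t => ![Real.cos (2 * Real.pi * t), Real.sin (2 * Real.pi * t),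
      Real.cos (6 * Real.pi * t)]) :
    altSig 3 x = 0 ∧ (volume (convexHull ℝ (x '' Icc 0 1))).toReal ≠ 0 := by
  constructor
  · unfold altSig
    rw [SigAux.integral_zero x hx]
    simp
  · exact SigAux.volume_pos x hx
end
end

section
/- Let x : [0,1] → ℝ^d be a Lipschitz path, let k ≤ d be odd, and let P : [k] → [d] be an order-preserving injection. For i ∈ [k], define P_i : [k−1] → [d] by P_i(r) = P(r) if r < i and P_i(r) = P(r+1) if r ≥ i. Then the alternating signature entries satisfy α_P(x) = (1/k) Σ_{i=1}^{k} (−1)^{i+1} σ_{P(i)}(x) · α_{P_i}(x), where σ_j(x) = x_j(1) − x_j(0) is the level-1 signature. -/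
set_option maxHeartbeats 1000000


open MeasureTheory Set Filter Topology

noncomputable section

/-- The alternating signature entry `α_P(x)` for an order-preserving injection
`P : [k] → [d]`. -/
def altSigEntry (d k : ℕ) (x : ℝ → Fin d → ℝ) (P : Fin k → Fin d) : ℝ :=
  (1 / (Nat.factorial k : ℝ)) *
    ∫ t in orderedSimplex k,
      Matrix.det (Matrix.of fun i j : Fin k => deriv x (t j) (P i))

/-- The level-2 signature entry `σ_{i,j}(x)`. -/
def sigPair (d : ℕ) (x : ℝ → Fin d → ℝ) (i j : Fin d) : ℝ :=
  ∫ t in orderedSimplex 2, deriv x (t 0) i * deriv x (t 1) j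

/-- The signed area `α_{i,j}(x) = (σ_{i,j}(x) - σ_{j,i}(x))/2` of the projection of `x`
to the `(eᵢ, eⱼ)`-plane. -/
def signedArea (d : ℕ) (x : ℝ → Fin d → ℝ) (i j : Fin d) : ℝ :=
  (1 / 2) * (sigPair d x i j - sigPair d x j i)


section Aux


private lemma helper_slope {G : ℝ → ℝ} {c L : ℝ} (h : HasDerivAt G L c) :
    Tendsto (fun N : ℕ => ((N : ℝ) + 1) * (G (c + 1 / ((N : ℝ) + 1)) - G c)) atTop (𝓝 L) := by
  have h1 : Tendsto (fun N : ℕ => c + 1 / ((N : ℝ) + 1)) atTop (𝓝[≠] c) := by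
    apply tendsto_nhdsWithin_of_tendsto_nhds_of_eventually_within
    · simpa using tendsto_const_nhds.add (tendsto_one_div_add_atTop_nhds_zero_nat (𝕜 := ℝ))
    · filter_upwards with N
      have : (0:ℝ) < 1 / ((N : ℝ) + 1) := by positivity
      simp only [mem_compl_iff, mem_singleton_iff]
      intro hc
      nlinarith [hc]
  have h2 := (hasDerivAt_iff_tendsto_slope.1 h).comp h1
  refine h2.congr fun N => ?_
  have hN : ((N : ℝ) + 1) ≠ 0 := by positivity
  simp only [Function.comp_apply, slope_def_field, add_sub_cancel_left]
  rw [one_div, div_eq_mul_inv, inv_inv, mul_comm]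

/-- FTC for (globally) Lipschitz real functions. -/
private lemma lipschitz_integral_deriv {g : ℝ → ℝ} {K : NNReal} (hg : LipschitzWith K g)
    (a b : ℝ) : ∫ u in a..b, deriv g u = g b - g a := by
  have cont : Continuous g := hg.continuous
  have hint : ∀ c e : ℝ, IntervalIntegrable g volume c e := fun c e => cont.intervalIntegrable c e
  -- the difference quotients
  set F : ℕ → ℝ → ℝ := fun N u => ((N : ℝ) + 1) * (g (u + 1 / ((N : ℝ) + 1)) - g u) with hF
  -- limit of ∫ F N
  have key1 : Tendsto (fun N => ∫ u in a..b, F N u) atTop (𝓝 (∫ u in a..b, deriv g u)) := by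
    apply intervalIntegral.tendsto_integral_filter_of_dominated_convergence (fun _ => (K : ℝ))
    · filter_upwards with N
      exact (continuous_const.mul ((cont.comp (by continuity)).sub cont)).aestronglyMeasurable.restrict
    · filter_upwards with N
      filter_upwards with u _
      have hd := hg.dist_le_mul (u + 1 / ((N : ℝ) + 1)) u
      rw [Real.dist_eq, Real.dist_eq, add_sub_cancel_left,
        abs_of_pos (by positivity : (0:ℝ) < 1/((N:ℝ)+1))] at hd
      have hN : (0:ℝ) < (N : ℝ) + 1 := by positivity
      rw [hF]
      simp only [Real.norm_eq_abs, abs_mul, abs_of_pos hN]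
      calc ((N:ℝ)+1) * |g (u + 1 / ((N : ℝ) + 1)) - g u| ≤ ((N:ℝ)+1) * ((K:ℝ) * (1/((N:ℝ)+1))) := by
            exact mul_le_mul_of_nonneg_left hd (by positivity)
        _ = (K : ℝ) := by field_simp
    · exact intervalIntegrable_const
    · have := hg.ae_differentiableAt_real
      filter_upwards [this] with u hu _
      exact helper_slope hu.hasDerivAt
  -- compute ∫ F N
  have hsh : ∀ c : ℝ, IntervalIntegrable (fun u => g (u + c)) volume a b := fun c =>
    (cont.comp (by continuity : Continuous fun u : ℝ => u + c)).intervalIntegrable a b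
  have key2 : ∀ N : ℕ, ∫ u in a..b, F N u
      = ((N : ℝ) + 1) * ((∫ u in b..(b + 1/((N:ℝ)+1)), g u) - ∫ u in a..(a + 1/((N:ℝ)+1)), g u) := by
    intro N
    have h1 : ∫ u in a..b, F N u
        = ((N : ℝ) + 1) * ((∫ u in a..b, g (u + 1/((N:ℝ)+1))) - ∫ u in a..b, g u) := by
      rw [← intervalIntegral.integral_sub (hsh _) (hint a b),
        ← intervalIntegral.integral_const_mul]
    rw [h1, intervalIntegral.integral_comp_add_right]
    congr 1
    have e1 : (∫ u in (a + 1/((N:ℝ)+1))..(b + 1/((N:ℝ)+1)), g u)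
        = (∫ u in (a + 1/((N:ℝ)+1))..b, g u) + ∫ u in b..(b + 1/((N:ℝ)+1)), g u :=
      (intervalIntegral.integral_add_adjacent_intervals (hint _ _) (hint _ _)).symm
    have e2 : (∫ u in a..b, g u)
        = (∫ u in a..(a + 1/((N:ℝ)+1)), g u) + ∫ u in (a + 1/((N:ℝ)+1))..b, g u :=
      (intervalIntegral.integral_add_adjacent_intervals (hint _ _) (hint _ _)).symm
    rw [e1, e2]; ring
  -- limit of the RHS of key2
  have key3 : Tendsto (fun N => ∫ u in a..b, F N u) atTop (𝓝 (g b - g a)) := by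
    have hb := helper_slope ((cont.integral_hasStrictDerivAt b b).hasDerivAt)
    have ha := helper_slope ((cont.integral_hasStrictDerivAt a a).hasDerivAt)
    simp only [intervalIntegral.integral_same, sub_zero] at hb ha
    have := hb.sub ha
    refine Tendsto.congr (fun N => ?_) this
    rw [key2 N]; ring
  exact tendsto_nhds_unique key1 key3
lemma measurableSet_orderedSimplex (k : ℕ) : MeasurableSet (orderedSimplex k) := by
  have h : orderedSimplex k =
      (⋂ (i : Fin k) (j : Fin k) (_ : i < j), {t : Fin k → ℝ | t i < t j}) ∩
        ⋂ i : Fin k, (fun t : Fin k → ℝ => t i) ⁻¹' Icc (0:ℝ) 1 := by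
    ext t
    simp only [orderedSimplex, mem_setOf_eq, mem_inter_iff, mem_iInter, mem_preimage]
    exact and_congr ⟨fun h i j hij => h hij, fun h a b hab => h a b hab⟩ Iff.rfl
  rw [h]
  refine MeasurableSet.inter ?_ ?_
  · exact MeasurableSet.iInter fun i => MeasurableSet.iInter fun j => MeasurableSet.iInter
      fun _ => measurableSet_lt (measurable_pi_apply i) (measurable_pi_apply j)
  · exact MeasurableSet.iInter fun i => (measurable_pi_apply i) measurableSet_Icc

lemma volume_orderedSimplex_ne_top (k : ℕ) : volume (orderedSimplex k) ≠ ⊤ := by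
  have hsub : orderedSimplex k ⊆ Icc (fun _ => (0:ℝ)) (fun _ => 1) := by
    intro t ht
    refine ⟨fun i => (ht.2 i).1, fun i => (ht.2 i).2⟩
  refine ne_top_of_le_ne_top ?_ (measure_mono hsub)
  rw [Real.volume_Icc_pi]
  simp

lemma integrableOn_orderedSimplex {k : ℕ} {F : (Fin k → ℝ) → ℝ} (hF : Measurable F) (C : ℝ)
    (hC : ∀ t ∈ orderedSimplex k, |F t| ≤ C) : IntegrableOn F (orderedSimplex k) :=
  Measure.integrableOn_of_bounded (volume_orderedSimplex_ne_top k) hF.aestronglyMeasurable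
    ((ae_restrict_iff' (measurableSet_orderedSimplex k)).2
      (ae_of_all _ fun t ht => by simpa using hC t ht))

lemma abs_det_le_of_abs_le {n : ℕ} (A : Matrix (Fin n) (Fin n) ℝ) {C : ℝ} (hC : 0 ≤ C)
    (h : ∀ i j, |A i j| ≤ C) : |A.det| ≤ (Nat.factorial n : ℝ) * C ^ n := by
  rw [Matrix.det_apply]
  refine (Finset.abs_sum_le_sum_abs _ _).trans ?_
  have hb : ∀ σ : Equiv.Perm (Fin n), |Equiv.Perm.sign σ • ∏ i, A (σ i) i| ≤ C ^ n := by
    intro σ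
    have h1 : |Equiv.Perm.sign σ • ∏ i, A (σ i) i| = |∏ i, A (σ i) i| := by
      rcases Int.units_eq_one_or (Equiv.Perm.sign σ) with hs | hs <;> simp [hs]
    rw [h1, Finset.abs_prod]
    calc ∏ i, |A (σ i) i| ≤ ∏ _i : Fin n, C :=
          Finset.prod_le_prod (fun _ _ => abs_nonneg _) (fun i _ => h _ _)
      _ = C ^ n := by simp
  refine (Finset.sum_le_sum fun σ _ => hb σ).trans ?_
  rw [Finset.sum_const, Finset.card_univ, Fintype.card_perm, nsmul_eq_mul]
  simp

section Slice

variable {n : ℕ}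

/-- lower endpoint of the `p`-th gap of an ordered tuple -/
def gapLo (p : Fin (n + 1)) (s : Fin n → ℝ) : ℝ :=
  if h : (p : ℕ) = 0 then 0 else s ⟨(p : ℕ) - 1, by have := p.isLt; omega⟩

/-- upper endpoint of the `p`-th gap of an ordered tuple -/
def gapHi (p : Fin (n + 1)) (s : Fin n → ℝ) : ℝ :=
  if h : (p : ℕ) = n then 1 else s ⟨(p : ℕ), by have := p.isLt; omega⟩

lemma gapLo_nonneg {p : Fin (n+1)} {s : Fin n → ℝ} (hs : s ∈ orderedSimplex n) :
    0 ≤ gapLo p s := by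
  unfold gapLo; split
  · exact le_rfl
  · exact (hs.2 _).1

lemma gapHi_le_one {p : Fin (n+1)} {s : Fin n → ℝ} (hs : s ∈ orderedSimplex n) :
    gapHi p s ≤ 1 := by
  unfold gapHi; split
  · exact le_rfl
  · exact (hs.2 _).2

lemma gapLo_le_gapHi {p : Fin (n+1)} {s : Fin n → ℝ} (hs : s ∈ orderedSimplex n) :
    gapLo p s ≤ gapHi p s := by
  unfold gapLo gapHi
  split <;> split
  · exact zero_le_one
  · exact (hs.2 _).1
  · exact (hs.2 _).2
  · exact hs.1.monotone (by rw [Fin.mk_le_mk]; omega)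

lemma insertNth_mem_simplex_iff (p : Fin (n+1)) (u : ℝ) (s : Fin n → ℝ) :
    p.insertNth u s ∈ orderedSimplex (n + 1) ↔
      s ∈ orderedSimplex n ∧ u ∈ Icc (0:ℝ) 1 ∧
        (∀ j : Fin n, p.succAbove j < p → s j < u) ∧
        (∀ j : Fin n, p < p.succAbove j → u < s j) := by
  constructor
  · rintro ⟨hmono, hIcc⟩
    have hcomp : s = p.insertNth u s ∘ p.succAbove := by
      funext j; simp [Fin.insertNth_apply_succAbove]
    refine ⟨⟨?_, ?_⟩, ?_, ?_, ?_⟩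
    · rw [hcomp]; exact hmono.comp (Fin.strictMono_succAbove p)
    · intro j; have := hIcc (p.succAbove j); rwa [Fin.insertNth_apply_succAbove] at this
    · have := hIcc p; rwa [Fin.insertNth_apply_same] at this
    · intro j hj
      have := hmono hj
      rwa [Fin.insertNth_apply_succAbove, Fin.insertNth_apply_same] at this
    · intro j hj
      have := hmono hj
      rwa [Fin.insertNth_apply_succAbove, Fin.insertNth_apply_same] at this
  · rintro ⟨⟨hs, hsI⟩, hu, h1, h2⟩
    constructor
    · intro a b hab
      rcases eq_or_ne a p with ha | ha
      · rcases eq_or_ne b p with hb | hb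
        · rw [ha, hb] at hab; exact absurd hab (lt_irrefl p)
        · obtain ⟨j, hj⟩ := Fin.exists_succAbove_eq hb
          rw [ha, ← hj, Fin.insertNth_apply_same, Fin.insertNth_apply_succAbove]
          exact h2 j (by rwa [hj, ← ha])
      · obtain ⟨j, hj⟩ := Fin.exists_succAbove_eq ha
        rcases eq_or_ne b p with hb | hb
        · rw [hb, ← hj, Fin.insertNth_apply_same, Fin.insertNth_apply_succAbove]
          exact h1 j (by rwa [hj, ← hb])
        · obtain ⟨j', hj'⟩ := Fin.exists_succAbove_eq hb
          rw [← hj, ← hj', Fin.insertNth_apply_succAbove, Fin.insertNth_apply_succAbove]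
          exact hs (Fin.succAbove_lt_succAbove_iff.1 (by rwa [hj, hj']))
    · intro i
      rcases eq_or_ne i p with rfl | hi
      · rwa [Fin.insertNth_apply_same]
      · obtain ⟨j, rfl⟩ := Fin.exists_succAbove_eq hi
        rw [Fin.insertNth_apply_succAbove]
        exact hsI j

end Slice

section Slice2
variable {n : ℕ}

private lemma ae_eq_of_between {α : Type*} [MeasurableSpace α] {μ : Measure α} {A B C : Set α}
    (h1 : A ⊆ B) (h2 : B ⊆ C) (h3 : A =ᵐ[μ] C) : B =ᵐ[μ] A := by
  rw [MeasureTheory.ae_eq_set] at h3 ⊢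
  refine ⟨measure_mono_null (diff_subset_diff_left h2) h3.2, ?_⟩
  rw [diff_eq_empty.2 h1]
  exact measure_empty

lemma fiber_ae_eq (p : Fin (n+1)) {s : Fin n → ℝ} (hs : s ∈ orderedSimplex n) :
    {u : ℝ | p.insertNth u s ∈ orderedSimplex (n+1)} =ᵐ[volume]
      Ioc (gapLo p s) (gapHi p s) := by
  have hIoo : Ioo (gapLo p s) (gapHi p s) ⊆ {u | p.insertNth u s ∈ orderedSimplex (n+1)} := by
    intro u hu
    rw [mem_setOf_eq, insertNth_mem_simplex_iff]
    refine ⟨hs, ⟨(gapLo_nonneg hs).trans hu.1.le, hu.2.le.trans (gapHi_le_one hs)⟩, ?_, ?_⟩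
    · intro j hj
      rw [Fin.succAbove_lt_iff_castSucc_lt] at hj
      have hj' : (j:ℕ) < (p:ℕ) := by simpa [Fin.lt_def] using hj
      have hple : s j ≤ gapLo p s := by
        unfold gapLo
        rw [dif_neg (by omega)]
        exact hs.1.monotone (by rw [Fin.le_def]; simp; omega)
      exact hple.trans_lt hu.1
    · intro j hj
      rw [Fin.lt_succAbove_iff_le_castSucc] at hj
      have hj' : (p:ℕ) ≤ (j:ℕ) := by simpa [Fin.le_def] using hj
      have hge : gapHi p s ≤ s j := by
        unfold gapHi
        rw [dif_neg (by have := j.isLt; omega)]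
        exact hs.1.monotone (by rw [Fin.le_def]; simpa)
      exact hu.2.trans_le hge
  have hIcc : {u : ℝ | p.insertNth u s ∈ orderedSimplex (n+1)}
      ⊆ Icc (gapLo p s) (gapHi p s) := by
    intro u hu
    rw [mem_setOf_eq, insertNth_mem_simplex_iff] at hu
    obtain ⟨-, huI, h1, h2⟩ := hu
    constructor
    · unfold gapLo
      split
      · exact huI.1
      · rename_i hp
        refine (h1 ⟨(p:ℕ)-1, by have := p.isLt; omega⟩ ?_).le
        rw [Fin.succAbove_lt_iff_castSucc_lt, Fin.lt_def]
        show (p:ℕ) - 1 < (p:ℕ); omega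
    · unfold gapHi
      split
      · exact huI.2
      · rename_i hp
        refine (h2 ⟨(p:ℕ), by have := p.isLt; omega⟩ ?_).le
        rw [Fin.lt_succAbove_iff_le_castSucc, Fin.le_def]
        simp
  exact (ae_eq_of_between hIoo hIcc Ioo_ae_eq_Icc).trans Ioo_ae_eq_Ioc

lemma slice_integral (p : Fin (n+1)) {ψ : ℝ → ℝ} (hψm : Measurable ψ) {Cψ : ℝ}
    (hψb : ∀ u, |ψ u| ≤ Cψ) {φ : (Fin n → ℝ) → ℝ} (hφm : Measurable φ) {Cφ : ℝ}
    (hφb : ∀ s, |φ s| ≤ Cφ) :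
    ∫ t in orderedSimplex (n+1), ψ (t p) * φ (t ∘ p.succAbove)
      = ∫ s in orderedSimplex n, (∫ u in gapLo p s..gapHi p s, ψ u) * φ s := by
  have hCψ : 0 ≤ Cψ := (abs_nonneg _).trans (hψb 0)
  have hCφ : 0 ≤ Cφ := (abs_nonneg _).trans (hφb 0)
  set e : ℝ × (Fin n → ℝ) ≃ᵐ (Fin (n+1) → ℝ) :=
    (MeasurableEquiv.piFinSuccAbove (fun _ => ℝ) p).symm with he
  have hem : MeasurePreserving e :=
    (volume_preserving_piFinSuccAbove (fun _ : Fin (n+1) => ℝ) p).symm _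
  have happ : ∀ z : ℝ × (Fin n → ℝ), e z = p.insertNth z.1 z.2 := by
    intro z
    simp [he, MeasurableEquiv.piFinSuccAbove_symm_apply, Fin.insertNthEquiv]
  have hsm : MeasurableSet (orderedSimplex (n+1)) := measurableSet_orderedSimplex _
  have hA : MeasurableSet (e ⁻¹' orderedSimplex (n+1)) := e.measurable hsm
  have step1 : ∫ t in orderedSimplex (n+1), ψ (t p) * φ (t ∘ p.succAbove)
      = ∫ z in e ⁻¹' orderedSimplex (n+1), ψ z.1 * φ z.2 := by
    rw [← hem.setIntegral_preimage_emb e.measurableEmbedding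
      (fun t => ψ (t p) * φ (t ∘ p.succAbove)) (orderedSimplex (n+1))]
    refine setIntegral_congr_fun hA fun z _ => ?_
    rw [happ z]
    congr 1
    · rw [Fin.insertNth_apply_same]
    · congr 1
      funext j
      rw [Function.comp_apply, Fin.insertNth_apply_succAbove]
  rw [step1]
  have hmeas_f : Measurable fun z : ℝ × (Fin n → ℝ) => ψ z.1 * φ z.2 :=
    (hψm.comp measurable_fst).mul (hφm.comp measurable_snd)
  have hbox : e ⁻¹' orderedSimplex (n+1)
      ⊆ (Icc (0:ℝ) 1) ×ˢ (Icc (fun _ : Fin n => (0:ℝ)) 1) := by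
    intro z hz
    rw [mem_preimage, happ z, insertNth_mem_simplex_iff] at hz
    exact ⟨hz.2.1, ⟨fun i => (hz.1.2 i).1, fun i => (hz.1.2 i).2⟩⟩
  have hint : Integrable ((e ⁻¹' orderedSimplex (n+1)).indicator
      fun z : ℝ × (Fin n → ℝ) => ψ z.1 * φ z.2) (volume.prod volume) := by
    refine Integrable.mono' (g := ((Icc (0:ℝ) 1 ×ˢ Icc (fun _ : Fin n => (0:ℝ)) 1).indicator
      fun _ => Cψ * Cφ)) ?_ ?_ ?_
    · refine (integrable_indicator_iff (measurableSet_Icc.prod measurableSet_Icc)).2 ?_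
      refine integrableOn_const (ne_of_lt ?_) enorm_ne_top
      rw [Measure.prod_prod]
      refine ENNReal.mul_lt_top ?_ ?_
      · rw [Real.volume_Icc]; simp
      · rw [Real.volume_Icc_pi]; simp
    · exact (hmeas_f.indicator hA).aestronglyMeasurable
    · refine ae_of_all _ fun z => ?_
      by_cases hz : z ∈ e ⁻¹' orderedSimplex (n+1)
      · rw [indicator_of_mem hz, indicator_of_mem (hbox hz), Real.norm_eq_abs, abs_mul]
        exact mul_le_mul (hψb _) (hφb _) (abs_nonneg _) hCψ
      · rw [indicator_of_notMem hz]
        simp only [norm_zero]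
        exact indicator_nonneg (fun _ _ => mul_nonneg hCψ hCφ) _
  rw [← integral_indicator hA, Measure.volume_eq_prod, integral_prod_symm _ hint]
  have inner : ∀ s : Fin n → ℝ,
      (∫ u, (e ⁻¹' orderedSimplex (n+1)).indicator
        (fun z : ℝ × (Fin n → ℝ) => ψ z.1 * φ z.2) (u, s))
      = (orderedSimplex n).indicator
          (fun s => (∫ u in gapLo p s..gapHi p s, ψ u) * φ s) s := by
    intro s
    have hfib : ∀ u : ℝ, (e ⁻¹' orderedSimplex (n+1)).indicator
        (fun z : ℝ × (Fin n → ℝ) => ψ z.1 * φ z.2) (u, s)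
        = {u : ℝ | p.insertNth u s ∈ orderedSimplex (n+1)}.indicator (fun u => ψ u * φ s) u := by
      intro u
      by_cases hu : p.insertNth u s ∈ orderedSimplex (n+1)
      · have hm1 : (u, s) ∈ ⇑e ⁻¹' orderedSimplex (n+1) := by rw [mem_preimage, happ]; exact hu
        have hm2 : u ∈ {u : ℝ | p.insertNth u s ∈ orderedSimplex (n+1)} := hu
        rw [indicator_of_mem hm1, indicator_of_mem hm2]
      · have hm1 : (u, s) ∉ ⇑e ⁻¹' orderedSimplex (n+1) := by rw [mem_preimage, happ]; exact hu
        have hm2 : u ∉ {u : ℝ | p.insertNth u s ∈ orderedSimplex (n+1)} := hu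
        rw [indicator_of_notMem hm1, indicator_of_notMem hm2]
    by_cases hs : s ∈ orderedSimplex n
    · rw [indicator_of_mem hs]
      simp_rw [hfib]
      have hfm : MeasurableSet {u : ℝ | p.insertNth u s ∈ orderedSimplex (n+1)} := by
        have hseteq : {u : ℝ | p.insertNth u s ∈ orderedSimplex (n+1)}
            = (fun u : ℝ => (u, s)) ⁻¹' (e ⁻¹' orderedSimplex (n+1)) := by
          ext u
          rw [mem_preimage, mem_preimage, happ]
          exact Iff.rfl
        rw [hseteq]
        exact (measurable_id.prodMk measurable_const) hA
      rw [integral_indicator hfm, setIntegral_congr_set (fiber_ae_eq p hs),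
        intervalIntegral.integral_of_le (gapLo_le_gapHi hs), integral_mul_const]
    · rw [indicator_of_notMem hs]
      have hzero : ∀ u : ℝ, {u : ℝ | p.insertNth u s ∈ orderedSimplex (n+1)}.indicator
          (fun u => ψ u * φ s) u = 0 := by
        intro u
        rw [indicator_of_notMem]
        intro hu
        exact hs ((insertNth_mem_simplex_iff p u s).1 hu).1
      simp_rw [hfib, hzero]
      exact integral_zero _ _
  simp_rw [inner]
  rw [integral_indicator (measurableSet_orderedSimplex n)]

end Slice2


lemma sum_range_neg_one_pow (m : ℕ) : ∑ q ∈ Finset.range (2*m+1), (-1:ℝ)^q = 1 := by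
  induction m with
  | zero => simp
  | succ m ih =>
    have h : 2*(m+1)+1 = ((2*m+1)+1)+1 := by ring
    rw [h, Finset.sum_range_succ, Finset.sum_range_succ, ih]
    have h1 : (-1:ℝ)^(2*m+1) = -1 := Odd.neg_one_pow ⟨m, by ring⟩
    have h2 : (-1:ℝ)^((2*m+1)+1) = 1 := Even.neg_one_pow ⟨m+1, by ring⟩
    rw [h1, h2]
    ring

lemma intervalIntegrable_of_bounded {ψ : ℝ → ℝ} (hm : Measurable ψ) {C : ℝ}
    (hb : ∀ u, |ψ u| ≤ C) (a b : ℝ) : IntervalIntegrable ψ volume a b := by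
  rw [intervalIntegrable_iff]
  refine Measure.integrableOn_of_bounded ?_ hm.aestronglyMeasurable
    (ae_of_all _ fun u => by simpa using hb u)
  rw [uIoc_eq_union]
  exact (measure_union_le _ _).trans_lt
    (ENNReal.add_lt_top.2 ⟨measure_Ioc_lt_top, measure_Ioc_lt_top⟩) |>.ne

lemma measurable_det {k : ℕ} {α : Type*} [MeasurableSpace α] {M : α → Matrix (Fin k) (Fin k) ℝ}
    (h : ∀ i j, Measurable fun a => M a i j) : Measurable fun a => (M a).det := by
  simp_rw [Matrix.det_apply, Units.smul_def, zsmul_eq_mul]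
  exact Finset.measurable_sum _ fun σ _ =>
    measurable_const.mul (Finset.measurable_prod _ fun i _ => h _ _)



lemma sum_gap_integral {n : ℕ} {s : Fin n → ℝ} (hs : s ∈ orderedSimplex n) {ψ : ℝ → ℝ}
    (hψ : ∀ a b : ℝ, IntervalIntegrable ψ volume a b) :
    ∑ p : Fin (n+1), ∫ u in gapLo p s..gapHi p s, ψ u = ∫ u in (0:ℝ)..1, ψ u := by
  clear hs
  set node : ℕ → ℝ := fun q =>
    if h : 1 ≤ q ∧ q ≤ n then s ⟨q-1, by omega⟩ else (if q = 0 then 0 else 1) with hnode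
  have hlo : ∀ p : Fin (n+1), gapLo p s = node (p:ℕ) := by
    intro p
    by_cases h : (p:ℕ) = 0
    · simp only [gapLo, hnode, dif_pos h, dif_neg (by omega : ¬(1 ≤ (p:ℕ) ∧ (p:ℕ) ≤ n)),
        if_pos h]
    · simp only [gapLo, hnode, dif_neg h,
        dif_pos (show 1 ≤ (p:ℕ) ∧ (p:ℕ) ≤ n by have := p.isLt; omega)]
  have hhi : ∀ p : Fin (n+1), gapHi p s = node ((p:ℕ)+1) := by
    intro p
    by_cases h : (p:ℕ) = n
    · simp only [gapHi, hnode, dif_pos h, dif_neg (by omega : ¬(1 ≤ (p:ℕ)+1 ∧ (p:ℕ)+1 ≤ n)),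
        if_neg (by omega : ¬(p:ℕ)+1 = 0)]
    · simp only [gapHi, hnode, dif_neg h,
        dif_pos (show 1 ≤ (p:ℕ)+1 ∧ (p:ℕ)+1 ≤ n by have := p.isLt; omega)]
      congr 1
  have hterm : ∀ p : Fin (n+1), (∫ u in gapLo p s..gapHi p s, ψ u)
      = (fun q : ℕ => ∫ u in (0:ℝ)..node q, ψ u) ((p:ℕ)+1)
        - (fun q : ℕ => ∫ u in (0:ℝ)..node q, ψ u) (p:ℕ) := by
    intro p
    rw [hlo, hhi]
    exact (intervalIntegral.integral_interval_sub_left (hψ _ _) (hψ _ _)).symm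
  rw [Finset.sum_congr rfl fun p _ => hterm p]
  rw [Fin.sum_univ_eq_sum_range
    (fun q => (fun q : ℕ => ∫ u in (0:ℝ)..node q, ψ u) (q+1)
      - (fun q : ℕ => ∫ u in (0:ℝ)..node q, ψ u) q) (n+1)]
  rw [Finset.sum_range_sub (fun q : ℕ => ∫ u in (0:ℝ)..node q, ψ u) (n+1)]
  have h1 : node (n+1) = 1 := by
    simp only [hnode, dif_neg (by omega : ¬(1 ≤ n+1 ∧ n+1 ≤ n)), if_neg (by omega : ¬n+1 = 0)]
  have h0 : node 0 = 0 := by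
    simp only [hnode, dif_neg (by omega : ¬(1 ≤ 0 ∧ 0 ≤ n))]
    simp
  rw [h1, h0]
  simp

lemma lipschitz_integral_deriv_pi {d : ℕ} {x : ℝ → Fin d → ℝ} {K : NNReal}
    (hx : LipschitzWith K x) (j : Fin d) :
    ∫ u in (0:ℝ)..1, deriv x u j = x 1 j - x 0 j := by
  have hxj : LipschitzWith K fun u => x u j :=
    LipschitzWith.of_dist_le_mul fun a b =>
      (dist_le_pi_dist (x a) (x b) j).trans (hx.dist_le_mul a b)
  have hcongr : ∀ᵐ u : ℝ, u ∈ Set.uIoc (0:ℝ) 1 → deriv x u j = deriv (fun u => x u j) u := by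
    filter_upwards [hx.ae_differentiableAt_real] with u hu _
    exact ((hasDerivAt_pi.1 hu.hasDerivAt) j).deriv.symm
  rw [intervalIntegral.integral_congr_ae hcongr, lipschitz_integral_deriv hxj 0 1]



theorem core_identity {d m : ℕ} (x : ℝ → Fin d → ℝ) (K : NNReal) (hx : LipschitzWith K x)
    (P : Fin (2*m+1) → Fin d) :
    (∫ t in orderedSimplex (2*m+1),
        Matrix.det (Matrix.of fun i j : Fin (2*m+1) => deriv x (t j) (P i)))
      = ∑ i : Fin (2*m+1), (-1:ℝ)^(i:ℕ) * ((x 1 (P i) - x 0 (P i)) *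
          ∫ s in orderedSimplex (2*m),
            Matrix.det (Matrix.of fun a b : Fin (2*m) => deriv x (s b) (P (i.succAbove a)))) := by
  have hfm : ∀ c : Fin d, Measurable fun u => deriv x u c := fun c =>
    (measurable_pi_apply c).comp (measurable_deriv x)
  have hfb : ∀ (u : ℝ) (c : Fin d), |deriv x u c| ≤ (K:ℝ) := by
    intro u c
    calc |deriv x u c| = ‖deriv x u c‖ := (Real.norm_eq_abs _).symm
      _ ≤ ‖deriv x u‖ := norm_le_pi_norm (deriv x u) c
      _ ≤ (K:ℝ) := norm_deriv_le_of_lipschitz hx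
  set Fm : Fin (2*m+1) → (Fin (2*m) → ℝ) → ℝ := fun i s =>
    Matrix.det (Matrix.of fun a b : Fin (2*m) => deriv x (s b) (P (i.succAbove a))) with hFmdef
  have hFm_meas : ∀ i, Measurable (Fm i) := by
    intro i
    apply measurable_det
    intro a b
    exact Measurable.comp (hfm _) (measurable_pi_apply b)
  set B : ℝ := (Nat.factorial (2*m) : ℝ) * (K:ℝ)^(2*m) with hB
  have hFm_bd : ∀ i s, |Fm i s| ≤ B :=
    fun i s => abs_det_le_of_abs_le _ K.coe_nonneg (fun a b => hfb _ _)
  have hψint : ∀ (c : Fin d) (a b : ℝ),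
      IntervalIntegrable (fun u => deriv x u c) volume a b :=
    fun c => intervalIntegrable_of_bounded (hfm c) (fun u => hfb u c)
  set J : Fin (2*m+1) → Fin (2*m+1) → ℝ := fun i p =>
    ∫ t in orderedSimplex (2*m+1), deriv x (t p) (P i) * Fm i (t ∘ p.succAbove) with hJ
  have hJint : ∀ (i p : Fin (2*m+1)), IntegrableOn
      (fun t : Fin (2*m+1) → ℝ => deriv x (t p) (P i) * Fm i (t ∘ p.succAbove))
      (orderedSimplex (2*m+1)) := by
    intro i p
    refine integrableOn_orderedSimplex ?_ ((K:ℝ) * B) ?_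
    · exact ((hfm (P i)).comp (measurable_pi_apply p)).mul
        ((hFm_meas i).comp (measurable_pi_iff.2 fun a => measurable_pi_apply _))
    · intro t _
      rw [abs_mul]
      exact mul_le_mul (hfb _ _) (hFm_bd _ _) (abs_nonneg _) K.coe_nonneg
  -- Step I : cofactor expansion along column p
  have stepI : ∀ p : Fin (2*m+1),
      (∫ t in orderedSimplex (2*m+1),
        Matrix.det (Matrix.of fun i j : Fin (2*m+1) => deriv x (t j) (P i)))
      = ∑ i : Fin (2*m+1), (-1:ℝ)^((i:ℕ)+(p:ℕ)) * J i p := by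
    intro p
    have hdet : ∀ t : Fin (2*m+1) → ℝ,
        Matrix.det (Matrix.of fun i j : Fin (2*m+1) => deriv x (t j) (P i))
        = ∑ i : Fin (2*m+1), (-1:ℝ)^((i:ℕ)+(p:ℕ)) *
            (deriv x (t p) (P i) * Fm i (t ∘ p.succAbove)) := by
      intro t
      rw [Matrix.det_succ_column (Matrix.of fun i j : Fin (2*m+1) => deriv x (t j) (P i)) p]
      refine Finset.sum_congr rfl fun i _ => ?_
      rw [mul_assoc]
      rfl
    calc (∫ t in orderedSimplex (2*m+1),
          Matrix.det (Matrix.of fun i j : Fin (2*m+1) => deriv x (t j) (P i)))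
        = ∫ t in orderedSimplex (2*m+1), ∑ i : Fin (2*m+1), (-1:ℝ)^((i:ℕ)+(p:ℕ)) *
            (deriv x (t p) (P i) * Fm i (t ∘ p.succAbove)) :=
          setIntegral_congr_fun (measurableSet_orderedSimplex _) fun t _ => hdet t
      _ = ∑ i : Fin (2*m+1), ∫ t in orderedSimplex (2*m+1), (-1:ℝ)^((i:ℕ)+(p:ℕ)) *
            (deriv x (t p) (P i) * Fm i (t ∘ p.succAbove)) :=
          integral_finset_sum _ (fun i _ => (hJint i p).const_mul _)
      _ = ∑ i : Fin (2*m+1), (-1:ℝ)^((i:ℕ)+(p:ℕ)) * J i p := by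
          refine Finset.sum_congr rfl fun i _ => ?_
          rw [MeasureTheory.integral_const_mul]
  -- Step III : row sums
  have stepIII : ∀ i : Fin (2*m+1), ∑ p : Fin (2*m+1), J i p
      = (x 1 (P i) - x 0 (P i)) * ∫ s in orderedSimplex (2*m), Fm i s := by
    intro i
    have h2 : ∀ p : Fin (2*m+1), J i p
        = ∫ s in orderedSimplex (2*m),
            (∫ u in gapLo p s..gapHi p s, deriv x u (P i)) * Fm i s := by
      intro p
      simp only [hJ]
      exact slice_integral p (hfm (P i)) (fun u => hfb u (P i)) (hFm_meas i) (hFm_bd i)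
    rw [Finset.sum_congr rfl fun p _ => h2 p, ← integral_finset_sum]
    · rw [setIntegral_congr_fun (measurableSet_orderedSimplex _)
        (g := fun s => (x 1 (P i) - x 0 (P i)) * Fm i s) ?_]
      · exact MeasureTheory.integral_const_mul _ _
      · intro s hs
        show (∑ p : Fin (2*m+1), (∫ u in gapLo p s..gapHi p s, deriv x u (P i)) * Fm i s)
          = (x 1 (P i) - x 0 (P i)) * Fm i s
        rw [← Finset.sum_mul]
        congr 1
        rw [sum_gap_integral hs (hψint (P i))]
        exact lipschitz_integral_deriv_pi hx (P i)
    · intro p _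
      have hglm : Measurable fun s : Fin (2*m) → ℝ => gapLo p s := by
        by_cases h : (p:ℕ) = 0
        · simp only [gapLo, dif_pos h]; exact measurable_const
        · simp only [gapLo, dif_neg h]; exact measurable_pi_apply _
      have hghm : Measurable fun s : Fin (2*m) → ℝ => gapHi p s := by
        by_cases h : (p:ℕ) = 2*m
        · simp only [gapHi, dif_pos h]; exact measurable_const
        · simp only [gapHi, dif_neg h]; exact measurable_pi_apply _
      have hΨc : Continuous fun c : ℝ => ∫ u in (0:ℝ)..c, deriv x u (P i) :=
        intervalIntegral.continuous_primitive (hψint (P i)) 0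
      have hrepr : (fun s : Fin (2*m) → ℝ =>
            (∫ u in gapLo p s..gapHi p s, deriv x u (P i)) * Fm i s)
          = fun s => ((∫ u in (0:ℝ)..gapHi p s, deriv x u (P i))
              - ∫ u in (0:ℝ)..gapLo p s, deriv x u (P i)) * Fm i s := by
        funext s
        rw [intervalIntegral.integral_interval_sub_left (hψint (P i) _ _) (hψint (P i) _ _)]
      refine integrableOn_orderedSimplex ?_ ((K:ℝ) * B) ?_
      · rw [hrepr]
        exact ((hΨc.measurable.comp hghm).sub (hΨc.measurable.comp hglm)).mul (hFm_meas i)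
      · intro t ht
        rw [abs_mul]
        refine mul_le_mul ?_ (hFm_bd i t) (abs_nonneg _) K.coe_nonneg
        calc |∫ u in gapLo p t..gapHi p t, deriv x u (P i)|
            ≤ (K:ℝ) * |gapHi p t - gapLo p t| := by
              have hb := intervalIntegral.norm_integral_le_of_norm_le_const
                (a := gapLo p t) (b := gapHi p t) (C := (K:ℝ))
                (f := fun u => deriv x u (P i))
                (fun u _ => by rw [Real.norm_eq_abs]; exact hfb u (P i))
              rwa [Real.norm_eq_abs] at hb
          _ ≤ (K:ℝ) * 1 := by
              refine mul_le_mul_of_nonneg_left ?_ K.coe_nonneg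
              rw [abs_of_nonneg (sub_nonneg.2 (gapLo_le_gapHi ht))]
              have h1 := gapLo_nonneg (p := p) ht
              have h2 := gapHi_le_one (p := p) ht
              linarith
          _ = (K:ℝ) := mul_one _
  -- assembly
  have hp : ∀ p : Fin (2*m+1), ∑ i : Fin (2*m+1), (-1:ℝ)^(i:ℕ) * J i p
      = (-1:ℝ)^(p:ℕ) * ∫ t in orderedSimplex (2*m+1),
          Matrix.det (Matrix.of fun i j : Fin (2*m+1) => deriv x (t j) (P i)) := by
    intro p
    rw [stepI p, Finset.mul_sum]
    refine Finset.sum_congr rfl fun i _ => ?_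
    have h2 : (-1:ℝ)^(p:ℕ) * ((-1:ℝ)^(p:ℕ)) = 1 := by
      rw [← pow_add]
      exact Even.neg_one_pow ⟨(p:ℕ), rfl⟩
    rw [pow_add]
    linear_combination (-((-1:ℝ)^(i:ℕ) * J i p)) * h2
  have hsum : ∑ p : Fin (2*m+1), (-1:ℝ)^(p:ℕ) = 1 := by
    rw [Fin.sum_univ_eq_sum_range (fun q => (-1:ℝ)^q) (2*m+1)]
    exact sum_range_neg_one_pow m
  calc (∫ t in orderedSimplex (2*m+1),
        Matrix.det (Matrix.of fun i j : Fin (2*m+1) => deriv x (t j) (P i)))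
      = (∑ p : Fin (2*m+1), (-1:ℝ)^(p:ℕ)) * ∫ t in orderedSimplex (2*m+1),
          Matrix.det (Matrix.of fun i j : Fin (2*m+1) => deriv x (t j) (P i)) := by
        rw [hsum, one_mul]
    _ = ∑ p : Fin (2*m+1), (-1:ℝ)^(p:ℕ) * ∫ t in orderedSimplex (2*m+1),
          Matrix.det (Matrix.of fun i j : Fin (2*m+1) => deriv x (t j) (P i)) :=
        Finset.sum_mul _ _ _
    _ = ∑ p : Fin (2*m+1), ∑ i : Fin (2*m+1), (-1:ℝ)^(i:ℕ) * J i p :=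
        Finset.sum_congr rfl fun p _ => (hp p).symm
    _ = ∑ i : Fin (2*m+1), ∑ p : Fin (2*m+1), (-1:ℝ)^(i:ℕ) * J i p :=
        Finset.sum_comm
    _ = ∑ i : Fin (2*m+1), (-1:ℝ)^(i:ℕ) * ((x 1 (P i) - x 0 (P i)) *
          ∫ s in orderedSimplex (2*m), Fm i s) := by
        refine Finset.sum_congr rfl fun i _ => ?_
        rw [← Finset.mul_sum, stepIII i]

lemma ae_coords_ne {k : ℕ} (c : ℝ) : ∀ᵐ t : Fin k → ℝ, ∀ j : Fin k, t j ≠ c := by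
  rw [ae_all_iff]
  intro j
  rw [ae_iff]
  have h : {a : Fin k → ℝ | ¬ a j ≠ c} = {t : Fin k → ℝ | t j = c} := by ext t; simp
  rw [h, MeasureTheory.volume_pi]
  exact Measure.pi_hyperplane (fun _ => (volume : Measure ℝ)) j c

lemma integral_det_congr {d k : ℕ} {x y : ℝ → Fin d → ℝ} (hxy : EqOn x y (Icc 0 1))
    (Q : Fin k → Fin d) :
    (∫ t in orderedSimplex k, Matrix.det (Matrix.of fun i j : Fin k => deriv x (t j) (Q i)))
      = ∫ t in orderedSimplex k, Matrix.det (Matrix.of fun i j : Fin k => deriv y (t j) (Q i)) := by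
  have hderiv : ∀ u ∈ Ioo (0:ℝ) 1, deriv x u = deriv y u := by
    intro u hu
    apply Filter.EventuallyEq.deriv_eq
    filter_upwards [Ioo_mem_nhds hu.1 hu.2] with v hv
    exact hxy (Ioo_subset_Icc_self hv)
  apply setIntegral_congr_ae (measurableSet_orderedSimplex k)
  filter_upwards [ae_coords_ne (k := k) 0, ae_coords_ne (k := k) 1] with t h0 h1 ht
  have hm : ∀ j : Fin k, t j ∈ Ioo (0:ℝ) 1 := fun j =>
    ⟨lt_of_le_of_ne (ht.2 j).1 (Ne.symm (h0 j)), lt_of_le_of_ne (ht.2 j).2 (h1 j)⟩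
  have hfun : (fun (i : Fin k) (j : Fin k) => deriv x (t j) (Q i))
      = fun i j => deriv y (t j) (Q i) := by
    funext i j
    rw [hderiv _ (hm j)]
  rw [hfun]

lemma exists_lipschitz_extension {d : ℕ} {x : ℝ → Fin d → ℝ} {K : NNReal}
    (hx : LipschitzOnWith K x (Icc 0 1)) :
    ∃ y : ℝ → Fin d → ℝ, LipschitzWith K y ∧ EqOn x y (Icc 0 1) := by
  have hcomp : ∀ j : Fin d, LipschitzOnWith K (fun t => x t j) (Icc 0 1) := by
    intro j
    rw [lipschitzOnWith_iff_dist_le_mul] at hx ⊢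
    intro a ha b hb
    exact (dist_le_pi_dist (x a) (x b) j).trans (hx a ha b hb)
  choose g hg using fun j => (hcomp j).extend_real
  refine ⟨fun t j => g j t, ?_, ?_⟩
  · rw [lipschitzWith_iff_dist_le_mul]
    intro a b
    rw [dist_pi_le_iff (mul_nonneg K.coe_nonneg dist_nonneg)]
    intro j
    exact (hg j).1.dist_le_mul a b
  · intro t ht
    funext j
    exact (hg j).2 ht


end Aux

/-- odd-level decomposition of the alternating signature
`α_P(x) = (1/k) Σᵢ (-1)^(i+1) σ_{P(i)}(x) α_{P_i}(x)` for odd `k = 2m+1 ≤ d`, where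
`P_i = P ∘ Fin.succAbove i` deletes the `i`-th index. -/
theorem altSigEntry_odd_decomposition (d m : ℕ) (hkd : 2 * m + 1 ≤ d)
    (x : ℝ → Fin d → ℝ) (K : NNReal) (hlip : LipschitzOnWith K x (Icc 0 1))
    (P : Fin (2 * m + 1) → Fin d) (hP : StrictMono P) :
    altSigEntry d (2 * m + 1) x P =
      (1 / (2 * m + 1 : ℝ)) * ∑ i : Fin (2 * m + 1),
        (-1 : ℝ) ^ (i : ℕ) * (x 1 (P i) - x 0 (P i)) *
          altSigEntry d (2 * m) x (P ∘ i.succAbove) := by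
  obtain ⟨y, hy, hxy⟩ := exists_lipschitz_extension hlip
  have h0mem : (0:ℝ) ∈ Icc (0:ℝ) 1 := ⟨le_refl _, zero_le_one⟩
  have h1mem : (1:ℝ) ∈ Icc (0:ℝ) 1 := ⟨zero_le_one, le_refl _⟩
  have hfne : ((2*m : ℕ).factorial : ℝ) ≠ 0 := Nat.cast_ne_zero.2 (Nat.factorial_ne_zero _)
  have hkne : (2*(m:ℝ)+1) ≠ 0 := by positivity
  unfold altSigEntry
  simp only [Function.comp_apply]
  rw [integral_det_congr hxy P, core_identity y K hy P, Finset.mul_sum, Finset.mul_sum]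
  refine Finset.sum_congr rfl fun i _ => ?_
  rw [integral_det_congr (k := 2*m) hxy (fun a => P (i.succAbove a))]
  rw [hxy h1mem, hxy h0mem]
  have hfact : ((2*m+1 : ℕ).factorial : ℝ) = (2*(m:ℝ)+1) * ((2*m : ℕ).factorial : ℝ) := by
    rw [Nat.factorial_succ]
    push_cast
    ring
  rw [hfact]
  field_simp
end
end

section
/- Let x : [0,1] → ℝ² be the planar moment curve x(t) = (t, t²). Then the region Z = {(x,y) ∈ ℝ² : −4x² + 4x − 4y + 1 ≥ 0 and −4x² − 4x + 4y + 1 ≥ 0} has area 1/3, and the convex hull of the image of x has area 1/6, so vol(Z) = 2 · vol(conv(x)). -/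
open MeasureTheory Set

noncomputable section

/-- The graph of a measurable function is a null set in the plane. -/
lemma graph_volume_zero (f : ℝ → ℝ) (hf : Measurable f) :
    (volume : Measure (ℝ × ℝ)) {p : ℝ × ℝ | p.2 = f p.1} = 0 := by
  have hG : MeasurableSet {p : ℝ × ℝ | p.2 = f p.1} := by
    have : {p : ℝ × ℝ | p.2 = f p.1} = (fun p : ℝ × ℝ => p.2 - f p.1) ⁻¹' {0} := by
      ext p; simp [sub_eq_zero]
    rw [this]
    exact (measurable_snd.sub (hf.comp measurable_fst)) (measurableSet_singleton 0)
  rw [Measure.volume_eq_prod, Measure.prod_apply hG]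
  have : ∀ x : ℝ, (volume : Measure ℝ) (Prod.mk x ⁻¹' {p : ℝ × ℝ | p.2 = f p.1}) = 0 := by
    intro x
    have : Prod.mk x ⁻¹' {p : ℝ × ℝ | p.2 = f p.1} = {f x} := by
      ext y; simp
    rw [this]
    exact measure_singleton _
  simp [this]

/-- Volume of the closed region between two functions. -/
lemma volume_region_cc {f g : ℝ → ℝ} (hf : Measurable f) (hg : Measurable g)
    {s : Set ℝ} (hs : MeasurableSet s)
    (hfi : IntegrableOn f s) (hgi : IntegrableOn g s)
    (hfg : ∀ x ∈ s, f x ≤ g x) :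
    (volume : Measure (ℝ × ℝ)) {p : ℝ × ℝ | p.1 ∈ s ∧ f p.1 ≤ p.2 ∧ p.2 ≤ g p.1}
      = ENNReal.ofReal (∫ y in s, (g - f) y) := by
  have key : volume.prod volume (regionBetween f g s) = ENNReal.ofReal (∫ y in s, (g - f) y) :=
    volume_regionBetween_eq_integral hfi hgi hs hfg
  rw [Measure.volume_eq_prod]
  refine le_antisymm ?_ ?_
  · have hsub : {p : ℝ × ℝ | p.1 ∈ s ∧ f p.1 ≤ p.2 ∧ p.2 ≤ g p.1} ⊆
        regionBetween f g s ∪ ({p : ℝ × ℝ | p.2 = f p.1} ∪ {p : ℝ × ℝ | p.2 = g p.1}) := by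
      rintro p ⟨hps, h1, h2⟩
      rcases eq_or_lt_of_le h1 with h | h
      · exact Or.inr (Or.inl h.symm)
      rcases eq_or_lt_of_le h2 with h' | h'
      · exact Or.inr (Or.inr h')
      exact Or.inl ⟨hps, h, h'⟩
    calc volume.prod volume {p : ℝ × ℝ | p.1 ∈ s ∧ f p.1 ≤ p.2 ∧ p.2 ≤ g p.1}
        ≤ volume.prod volume (regionBetween f g s ∪
            ({p : ℝ × ℝ | p.2 = f p.1} ∪ {p : ℝ × ℝ | p.2 = g p.1})) := measure_mono hsub
      _ ≤ volume.prod volume (regionBetween f g s)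
            + volume.prod volume ({p : ℝ × ℝ | p.2 = f p.1} ∪ {p : ℝ × ℝ | p.2 = g p.1}) :=
          measure_union_le _ _
      _ ≤ volume.prod volume (regionBetween f g s)
            + (volume.prod volume {p : ℝ × ℝ | p.2 = f p.1}
               + volume.prod volume {p : ℝ × ℝ | p.2 = g p.1}) := by
          gcongr; exact measure_union_le _ _
      _ = ENNReal.ofReal (∫ y in s, (g - f) y) := by
          rw [key, ← Measure.volume_eq_prod, graph_volume_zero f hf, graph_volume_zero g hg]
          simp
  · rw [← key]
    apply measure_mono
    rintro p ⟨hps, h1, h2⟩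
    exact ⟨hps, le_of_lt h1, le_of_lt h2⟩

lemma finTwoArrow_preimage (T : Set (ℝ × ℝ)) :
    (MeasurableEquiv.finTwoArrow : (Fin 2 → ℝ) ≃ᵐ ℝ × ℝ) ⁻¹' T
      = {p : Fin 2 → ℝ | (p 0, p 1) ∈ T} := by
  ext p
  simp [MeasurableEquiv.finTwoArrow]

lemma volume_pi_two (T : Set (ℝ × ℝ)) (hT : MeasurableSet T) :
    (volume : Measure (Fin 2 → ℝ)) {p : Fin 2 → ℝ | (p 0, p 1) ∈ T}
      = (volume : Measure (ℝ × ℝ)) T := by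
  rw [← finTwoArrow_preimage]
  exact (volume_preserving_finTwoArrow ℝ).measure_preimage hT.nullMeasurableSet

/-- The convex hull of the moment curve. -/
lemma convexHull_moment :
    convexHull ℝ ((fun t : ℝ => ![t, t ^ 2]) '' Icc 0 1)
      = {p : Fin 2 → ℝ | (p 0) ^ 2 ≤ p 1 ∧ p 1 ≤ p 0} := by
  apply le_antisymm
  · apply convexHull_min
    · rintro p ⟨t, ht, rfl⟩
      constructor
      · simp
      · simp only [Matrix.cons_val_one, Matrix.head_cons, Matrix.cons_val_zero]
        nlinarith [ht.1, ht.2]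
    · rintro p hp q hq a b ha hb hab
      have h0 : (a • p + b • q) 0 = a * p 0 + b * q 0 := by simp
      have h1 : (a • p + b • q) 1 = a * p 1 + b * q 1 := by simp
      have key := (Even.convexOn_pow (n := 2) (by norm_num)).2
        (mem_univ (p 0)) (mem_univ (q 0)) ha hb hab
      simp only [smul_eq_mul] at key
      have k1 : a * (p 0) ^ 2 ≤ a * p 1 := mul_le_mul_of_nonneg_left hp.1 ha
      have k2 : b * (q 0) ^ 2 ≤ b * q 1 := mul_le_mul_of_nonneg_left hq.1 hb
      constructor
      · rw [h0, h1]
        linarith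
      · rw [h0, h1]
        nlinarith [hp.2, hq.2]
  · rintro p ⟨h1, h2⟩
    set t : ℝ := p 0 with ht
    have htt : t ^ 2 ≤ t := le_trans h1 h2
    have ht0 : 0 ≤ t := by nlinarith
    have ht1 : t ≤ 1 := by nlinarith
    have hvt : (![t, t ^ 2] : Fin 2 → ℝ) ∈
        convexHull ℝ ((fun t : ℝ => ![t, t ^ 2]) '' Icc 0 1) :=
      subset_convexHull ℝ _ ⟨t, ⟨ht0, ht1⟩, rfl⟩
    have hv0 : (![(0:ℝ), 0 ^ 2] : Fin 2 → ℝ) ∈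
        convexHull ℝ ((fun t : ℝ => ![t, t ^ 2]) '' Icc 0 1) :=
      subset_convexHull ℝ _ ⟨0, by norm_num, rfl⟩
    have hv1 : (![(1:ℝ), 1 ^ 2] : Fin 2 → ℝ) ∈
        convexHull ℝ ((fun t : ℝ => ![t, t ^ 2]) '' Icc 0 1) :=
      subset_convexHull ℝ _ ⟨1, by norm_num, rfl⟩
    have hconv := convex_convexHull ℝ ((fun t : ℝ => ![t, t ^ 2]) '' Icc 0 1)
    -- the point (t, t) lies in the hull
    have hw : (![t, t] : Fin 2 → ℝ) ∈
        convexHull ℝ ((fun t : ℝ => ![t, t ^ 2]) '' Icc 0 1) := by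
      have := hconv hv0 hv1 (a := 1 - t) (b := t) (by linarith) ht0 (by ring)
      convert this using 1
      funext i
      fin_cases i <;> simp <;> ring
    rcases eq_or_lt_of_le htt with heq | hlt
    · -- degenerate: p = ![t, t^2]
      have hp1 : p 1 = t ^ 2 := le_antisymm (by rw [heq]; exact h2) h1
      have : p = ![t, t ^ 2] := by
        funext i; fin_cases i
        · simp [ht]
        · simp [hp1]
      rw [this]; exact hvt
    · set s : ℝ := (p 1 - t ^ 2) / (t - t ^ 2) with hs
      have hden : 0 < t - t ^ 2 := by linarith
      have hs0 : 0 ≤ s := div_nonneg (by linarith) (le_of_lt hden)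
      have hs1 : s ≤ 1 := by
        rw [div_le_one hden]; linarith
      have hkey : s * (t - t ^ 2) = p 1 - t ^ 2 := by
        rw [hs]; exact div_mul_cancel₀ _ (ne_of_gt hden)
      have := hconv hvt hw (a := 1 - s) (b := s) (by linarith) hs0 (by ring)
      convert this using 1
      funext i
      fin_cases i
      · simp; ring
      · simp; nlinarith [hkey]

set_option maxHeartbeats 1000000 in
/-- For the planar moment curve `x(t) = (t, t²)`, the zonoid
`Z = {(x,y) : -4x² + 4x - 4y + 1 ≥ 0, -4x² - 4x + 4y + 1 ≥ 0}` has area `1/3`, the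
convex hull of the curve has area `1/6`, and `vol(Z) = 2 · vol(conv(x))`. -/
theorem zonoid_moment_curve (x : ℝ → Fin 2 → ℝ)
    (hx : x = fun t => ![t, t ^ 2])
    (Z : Set (Fin 2 → ℝ))
    (hZ : Z = {p | 0 ≤ -4 * (p 0) ^ 2 + 4 * p 0 - 4 * p 1 + 1 ∧
      0 ≤ -4 * (p 0) ^ 2 - 4 * p 0 + 4 * p 1 + 1}) :
    (volume Z).toReal = 1 / 3 ∧
    (volume (convexHull ℝ (x '' Icc 0 1))).toReal = 1 / 6 ∧
    (volume Z).toReal = 2 * (volume (convexHull ℝ (x '' Icc 0 1))).toReal := by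
  -- volume of Z
  have hZvol : (volume Z).toReal = 1 / 3 := by
    have hset : Z = {p : Fin 2 → ℝ | (p 0, p 1) ∈
        {q : ℝ × ℝ | q.1 ∈ Icc (-(1/2) : ℝ) (1/2) ∧
          (fun u : ℝ => u ^ 2 + u - 1/4) q.1 ≤ q.2 ∧
          q.2 ≤ (fun u : ℝ => -u ^ 2 + u + 1/4) q.1}} := by
      rw [hZ]; ext p
      simp only [mem_setOf_eq, mem_Icc]
      constructor
      · rintro ⟨ha, hb⟩
        refine ⟨⟨by nlinarith, by nlinarith⟩, by nlinarith, by nlinarith⟩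
      · rintro ⟨-, h1, h2⟩
        constructor <;> nlinarith
    have hf : Measurable (fun u : ℝ => u ^ 2 + u - 1/4) := by fun_prop
    have hg : Measurable (fun u : ℝ => -u ^ 2 + u + 1/4) := by fun_prop
    have hfi : IntegrableOn (fun u : ℝ => u ^ 2 + u - 1/4) (Icc (-(1/2) : ℝ) (1/2)) :=
      Continuous.integrableOn_Icc (by fun_prop)
    have hgi : IntegrableOn (fun u : ℝ => -u ^ 2 + u + 1/4) (Icc (-(1/2) : ℝ) (1/2)) :=
      Continuous.integrableOn_Icc (by fun_prop)
    have hfg : ∀ u ∈ Icc (-(1/2) : ℝ) (1/2),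
        (fun u : ℝ => u ^ 2 + u - 1/4) u ≤ (fun u : ℝ => -u ^ 2 + u + 1/4) u := by
      rintro u ⟨hu1, hu2⟩
      show u ^ 2 + u - 1/4 ≤ -u ^ 2 + u + 1/4
      nlinarith
    have hv : (volume : Measure (ℝ × ℝ)) {q : ℝ × ℝ | q.1 ∈ Icc (-(1/2) : ℝ) (1/2) ∧
          (fun u : ℝ => u ^ 2 + u - 1/4) q.1 ≤ q.2 ∧
          q.2 ≤ (fun u : ℝ => -u ^ 2 + u + 1/4) q.1}
        = ENNReal.ofReal (∫ y in Icc (-(1/2) : ℝ) (1/2),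
            (((fun u : ℝ => -u ^ 2 + u + 1/4) - fun u : ℝ => u ^ 2 + u - 1/4 : ℝ → ℝ)) y) :=
      volume_region_cc hf hg measurableSet_Icc hfi hgi hfg
    have hT : MeasurableSet {q : ℝ × ℝ | q.1 ∈ Icc (-(1/2) : ℝ) (1/2) ∧
        (fun u : ℝ => u ^ 2 + u - 1/4) q.1 ≤ q.2 ∧
        q.2 ≤ (fun u : ℝ => -u ^ 2 + u + 1/4) q.1} := by
      apply MeasurableSet.inter
      · exact measurable_fst measurableSet_Icc
      apply MeasurableSet.inter
      · exact measurableSet_le (f := fun q : ℝ × ℝ => q.1 ^ 2 + q.1 - 1/4)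
          (g := fun q : ℝ × ℝ => q.2) (by fun_prop) (by fun_prop)
      · exact measurableSet_le (f := fun q : ℝ × ℝ => q.2)
          (g := fun q : ℝ × ℝ => -q.1 ^ 2 + q.1 + 1/4) (by fun_prop) (by fun_prop)
    have hint : ∫ y in Icc (-(1/2) : ℝ) (1/2),
        (((fun u : ℝ => -u ^ 2 + u + 1/4) - fun u : ℝ => u ^ 2 + u - 1/4 : ℝ → ℝ)) y = 1/3 := by
      rw [MeasureTheory.integral_Icc_eq_integral_Ioc,
        ← intervalIntegral.integral_of_le (by norm_num)]
      have heq : ∀ y : ℝ, (((fun u : ℝ => -u ^ 2 + u + 1/4) - fun u : ℝ => u ^ 2 + u - 1/4 : ℝ → ℝ)) y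
          = 1/2 - 2 * y ^ 2 := by intro y; simp; ring
      simp only [heq]
      rw [intervalIntegral.integral_sub
        (by apply Continuous.intervalIntegrable; fun_prop)
        (by apply Continuous.intervalIntegrable; fun_prop),
        intervalIntegral.integral_const_mul]
      norm_num
    rw [hset, volume_pi_two _ hT, hv, hint]
    norm_num
  -- volume of convex hull
  have hCvol : (volume (convexHull ℝ (x '' Icc 0 1))).toReal = 1 / 6 := by
    rw [hx, convexHull_moment]
    have hset : {p : Fin 2 → ℝ | (p 0) ^ 2 ≤ p 1 ∧ p 1 ≤ p 0}
        = {p : Fin 2 → ℝ | (p 0, p 1) ∈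
          {q : ℝ × ℝ | q.1 ∈ Icc (0 : ℝ) 1 ∧
            (fun u : ℝ => u ^ 2) q.1 ≤ q.2 ∧ q.2 ≤ (fun u : ℝ => u) q.1}} := by
      ext p
      simp only [mem_setOf_eq, mem_Icc]
      constructor
      · rintro ⟨h1, h2⟩
        refine ⟨⟨by nlinarith, by nlinarith⟩, h1, h2⟩
      · rintro ⟨-, h1, h2⟩
        exact ⟨h1, h2⟩
    have hf : Measurable (fun u : ℝ => u ^ 2) := by fun_prop
    have hg : Measurable (fun u : ℝ => u) := measurable_id
    have hfi : IntegrableOn (fun u : ℝ => u ^ 2) (Icc (0 : ℝ) 1) :=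
      Continuous.integrableOn_Icc (by fun_prop)
    have hgi : IntegrableOn (fun u : ℝ => u) (Icc (0 : ℝ) 1) :=
      Continuous.integrableOn_Icc (by fun_prop)
    have hfg : ∀ u ∈ Icc (0 : ℝ) 1, (fun u : ℝ => u ^ 2) u ≤ (fun u : ℝ => u) u := by
      rintro u ⟨hu1, hu2⟩
      show u ^ 2 ≤ u
      nlinarith
    have hv : (volume : Measure (ℝ × ℝ)) {q : ℝ × ℝ | q.1 ∈ Icc (0 : ℝ) 1 ∧
          (fun u : ℝ => u ^ 2) q.1 ≤ q.2 ∧ q.2 ≤ (fun u : ℝ => u) q.1}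
        = ENNReal.ofReal (∫ y in Icc (0 : ℝ) 1,
            (((fun u : ℝ => u) - fun u : ℝ => u ^ 2 : ℝ → ℝ)) y) :=
      volume_region_cc hf hg measurableSet_Icc hfi hgi hfg
    have hT : MeasurableSet {q : ℝ × ℝ | q.1 ∈ Icc (0 : ℝ) 1 ∧
        (fun u : ℝ => u ^ 2) q.1 ≤ q.2 ∧ q.2 ≤ (fun u : ℝ => u) q.1} := by
      apply MeasurableSet.inter
      · exact measurable_fst measurableSet_Icc
      apply MeasurableSet.inter
      · exact measurableSet_le (f := fun q : ℝ × ℝ => q.1 ^ 2)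
          (g := fun q : ℝ × ℝ => q.2) (by fun_prop) (by fun_prop)
      · exact measurableSet_le (f := fun q : ℝ × ℝ => q.2)
          (g := fun q : ℝ × ℝ => q.1) (by fun_prop) (by fun_prop)
    have hint : ∫ y in Icc (0 : ℝ) 1, (((fun u : ℝ => u) - fun u : ℝ => u ^ 2 : ℝ → ℝ)) y = 1/6 := by
      rw [MeasureTheory.integral_Icc_eq_integral_Ioc,
        ← intervalIntegral.integral_of_le (by norm_num)]
      have heq : ∀ y : ℝ, (((fun u : ℝ => u) - fun u : ℝ => u ^ 2 : ℝ → ℝ)) y = y - y ^ 2 := by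
        intro y; simp
      simp only [heq]
      rw [intervalIntegral.integral_sub
        (by apply Continuous.intervalIntegrable; fun_prop)
        (by apply Continuous.intervalIntegrable; fun_prop)]
      norm_num
    rw [hset, volume_pi_two _ hT, hv, hint]
    norm_num
  exact ⟨hZvol, hCvol, by rw [hZvol, hCvol]; norm_num⟩
end
end
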